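/- arXiv:2411.19208 — 2 statements merged into one kernel-verified Lean document; each statement's English description precedes it below -/
import Mathlib

section
/- Let $n, \tilde{n}, d, p$ be integers with $0 \le d < \min\{n,\tilde{n}\}$ and $0 \le p \le \min\{n,\tilde{n}\}-d$. For $\tau \in \bar{\mathcal{S}}_{\le p}(n,d)$ and a $d$-subset $B$ of $[n]$ with elements $b_1 < \dots < b_d$, let $\gamma_{\tau,\tilde{n}}(B)$ be the set obtained from $B$ by replacing $b_j$ with $b_j + \tilde{n} - n$ for each $j$ such that the $(\tau,B,j)$-series is right-aligned. Define $\phi$ mapping $\tau \in \bar{\mathcal{S}}_{\le p}(n,d)$ to the sign function $\tilde{\tau}:\binom{[\tilde{n}]}{d}\to\{+,-\}$ with $\tilde{\tau}^{-1}(+)=\{\gamma_{\tau,\tilde{n}}(B) \mid B\in\tau^{-1}(+)\}$. Then $\phi$ is a bijection between $\bar{\mathcal{S}}_{\le p}(n,d)$ and $\bar{\mathcal{S}}_{\le p}(\tilde{n},d)$, and for all $\sigma,\sigma' \in \bar{\mathcal{S}}_{\le p}(n,d)$ one has $\sigma \preceq_{\bar{\mathcal{S}}} \sigma'$ if and only if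 $\phi(\sigma) \preceq_{\bar{\mathcal{S}}} \phi(\sigma')$. -/
/-! Common definitions: signotopes and co-signotopes on `[n] = {1, …, n}` (encoded as
`Finset.Icc 1 n` in `ℕ`), sign functions are `Finset ℕ → Bool` (`true` = `+`, `false` = `-`)
that vanish (are `-`) away from the relevant subsets. -/

open Classical in
/-- The sign function with `+`-set `S` (and `-` elsewhere). -/
noncomputable def ofPlusSet (S : Set (Finset ℕ)) : Finset ℕ → Bool :=
  fun A => if A ∈ S then true else false

/-- Number of sign changes in a list of signs. -/
def signChanges (l : List Bool) : ℕ :=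
  ((l.zip l.tail).filter fun p => p.1 ≠ p.2).length

/-- Number of `+`-subsets of a sign function. -/
noncomputable def plusCount (τ : Finset ℕ → Bool) : ℕ :=
  {A : Finset ℕ | τ A = true}.ncard

/-- The series of signs `τ (C ∪ {x})` for `x ∈ [n] \ C` in increasing order.
For a `d`-subset `B` with `i`-th smallest element `b`, `series n τ (B.erase b)` is
the `(τ,B,i)`-series. -/
def series (n : ℕ) (τ : Finset ℕ → Bool) (C : Finset ℕ) : List Bool :=
  ((Finset.Icc 1 n \ C).sort (· ≤ ·)).map fun x => τ (insert x C)

/-- An `r`-signotope on `[n]`, encoded as a sign function on all of `Finset ℕ`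
which is `-` away from the `r`-subsets of `[n]`. -/
def IsSignotope (n r : ℕ) (σ : Finset ℕ → Bool) : Prop :=
  (∀ A, σ A = true → A ⊆ Finset.Icc 1 n ∧ A.card = r) ∧
  ∀ X : Finset ℕ, X ⊆ Finset.Icc 1 n → X.card = r + 1 →
    signChanges ((X.sort (· ≤ ·)).map fun x => σ (X.erase x)) ≤ 1

/-- A `d`-co-signotope on `[n]`: every `(τ,B,i)`-series has at most one sign change. -/
def IsCoSignotope (n d : ℕ) (τ : Finset ℕ → Bool) : Prop :=
  (∀ A, τ A = true → A ⊆ Finset.Icc 1 n ∧ A.card = d) ∧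
  ∀ B : Finset ℕ, B ⊆ Finset.Icc 1 n → B.card = d → ∀ b ∈ B,
    signChanges (series n τ (B.erase b)) ≤ 1

/-- `𝒮_p(n,r)`: `r`-signotopes on `[n]` with exactly `p` `+`-signs. -/
noncomputable def sigSet (n r p : ℕ) : Set (Finset ℕ → Bool) :=
  {σ | IsSignotope n r σ ∧ plusCount σ = p}

/-- `𝒮_{≤p}(n,r)`. -/
noncomputable def sigSetLe (n r p : ℕ) : Set (Finset ℕ → Bool) :=
  {σ | IsSignotope n r σ ∧ plusCount σ ≤ p}

/-- `𝒮̄_p(n,d)`: `d`-co-signotopes on `[n]` with exactly `p` `+`-subsets. -/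
noncomputable def coSigSet (n d p : ℕ) : Set (Finset ℕ → Bool) :=
  {τ | IsCoSignotope n d τ ∧ plusCount τ = p}

/-- `𝒮̄_{≤p}(n,d)`. -/
noncomputable def coSigSetLe (n d p : ℕ) : Set (Finset ℕ → Bool) :=
  {τ | IsCoSignotope n d τ ∧ plusCount τ ≤ p}

/-- `σ` and `τ` differ by a single step: `σ⁻¹(+) ⊊ τ⁻¹(+)` and `|τ⁻¹(+)| = |σ⁻¹(+)| + 1`. -/
noncomputable def SingleStep (σ τ : Finset ℕ → Bool) : Prop :=
  {A | σ A = true} ⊂ {A | τ A = true} ∧ plusCount τ = plusCount σ + 1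

/-- The higher Bruhat order on `r`-signotopes on `[n]`: reflexive-transitive closure of
the single step relation. -/
noncomputable def BruhatLe (n r : ℕ) (σ τ : Finset ℕ → Bool) : Prop :=
  Relation.ReflTransGen (fun a b => IsSignotope n r a ∧ IsSignotope n r b ∧ SingleStep a b) σ τ

/-- The complementary higher Bruhat order on `d`-co-signotopes on `[n]`. -/
noncomputable def CoBruhatLe (n d : ℕ) (σ τ : Finset ℕ → Bool) : Prop :=
  Relation.ReflTransGen (fun a b => IsCoSignotope n d a ∧ IsCoSignotope n d b ∧ SingleStep a b) σ τ

/-- Adjacency in the graph `G_{n,d}`: `B' = (B \ {x}) ∪ {y}` with no element of `B \ {x}`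
strictly between `x` and `y`. -/
def GAdj (n d : ℕ) (B B' : Finset ℕ) : Prop :=
  B ⊆ Finset.Icc 1 n ∧ B.card = d ∧ B' ⊆ Finset.Icc 1 n ∧ B'.card = d ∧
  ∃ x ∈ B, ∃ y ∈ Finset.Icc 1 n, y ∉ B ∧ B' = insert y (B.erase x) ∧
    ∀ z ∈ B.erase x, ¬(min x y < z ∧ z < max x y)

/-- The source subset `S_{n,d,i} = {1,…,i} ∪ {n-d+i+1,…,n}`. -/
def sourceSubset (n d i : ℕ) : Finset ℕ :=
  Finset.Icc 1 i ∪ Finset.Icc (n - d + i + 1) n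

/-- Connectivity inside the `+`-subsets of `τ` (the induced subgraph `G_{n,d}[τ]`). -/
def plusConn (n d : ℕ) (τ : Finset ℕ → Bool) : Finset ℕ → Finset ℕ → Prop :=
  Relation.ReflTransGen fun A A' => τ A = true ∧ τ A' = true ∧ GAdj n d A A'

/-- The vertex set `𝒞^τ_i` of the `+`-component of `τ` containing `S_{n,d,i}`
(empty if `S_{n,d,i}` is not a `+`-subset). -/
def comp (n d : ℕ) (τ : Finset ℕ → Bool) (i : ℕ) : Set (Finset ℕ) :=
  {B | τ (sourceSubset n d i) = true ∧ τ B = true ∧ plusConn n d τ (sourceSubset n d i) B}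

/-- The `j`-th smallest element (1-based) of a finite set of naturals. -/
def nthElt (B : Finset ℕ) (j : ℕ) : ℕ := (B.sort (· ≤ ·)).getD (j - 1) 0

/-- `b_j` with the conventions `b_0 = 0` and `b_{d+1} = n+1` (as an integer). -/
def extNth (n d : ℕ) (B : Finset ℕ) (j : ℕ) : ℤ :=
  if j = 0 then 0 else if j ≤ d then (nthElt B j : ℤ) else (n : ℤ) + 1

/-- A series is left-aligned if it starts with `+` and ends with `-`. -/
def LeftAligned (l : List Bool) : Prop :=
  l.head? = some true ∧ l.getLast? = some false

/-- A series is right-aligned if it starts with `-` and ends with `+`. -/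
def RightAligned (l : List Bool) : Prop :=
  l.head? = some false ∧ l.getLast? = some true

/-- `𝒮̄_{p,i}(n,d)`: co-signotopes in `𝒮̄_p(n,d)` whose only nonempty `+`-component
is `𝒞^τ_i` (i.e. every `+`-subset lies in `𝒞^τ_i`). -/
noncomputable def coSigOnly (n d p i : ℕ) : Set (Finset ℕ → Bool) :=
  {τ | IsCoSignotope n d τ ∧ plusCount τ = p ∧ ∀ B, τ B = true → B ∈ comp n d τ i}

/-- `Z(d,i)`: points `(a_1,…,a_d) ∈ ℤ_{>0}^d` (0-indexed in Lean) with `a_j ≥ a_{j-1}`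
for `j ∈ [2,i]` and `a_j ≥ a_{j+1}` for `j ∈ [i+1,d-1]` (1-based indices). -/
def ZSet (d i : ℕ) : Set (Fin d → ℤ) :=
  {a | (∀ j, 0 < a j) ∧
    (∀ j k : Fin d, (j : ℕ) + 1 = (k : ℕ) → (k : ℕ) + 1 ≤ i → a j ≤ a k) ∧
    (∀ j k : Fin d, (j : ℕ) + 1 = (k : ℕ) → i ≤ (j : ℕ) → a k ≤ a j)}

/-- A `(d,i)`-Ferrers diagram with respect to `p`. -/
def IsFerrers (d i p : ℕ) (F : Set (Fin d → ℤ)) : Prop :=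
  F ⊆ ZSet d i ∧ F.ncard = p ∧
  ∀ a ∈ F, ∀ a' ∈ ZSet d i, (∀ j, a' j ≤ a j) → a' ∈ F

/-- The number of `(d,i)`-Ferrers diagrams with respect to `p`. -/
noncomputable def ferrersCount (d i p : ℕ) : ℕ :=
  {F : Set (Fin d → ℤ) | IsFerrers d i p F}.ncard

/-- `f_{n,d,i,j}` (here `j` is the 1-based coordinate index). -/
def fFun (n d i j : ℕ) (x : ℕ) : ℤ :=
  if j ≤ i then (x : ℤ) - j + 1 else ((n : ℤ) - x) - ((d : ℤ) - j) + 1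

/-- `g_{n,d,i}` maps a `d`-subset `B = (b_1 < … < b_d)` to
`(f_{n,d,i,1}(b_1), …, f_{n,d,i,d}(b_d))`. -/
def gMap (n d i : ℕ) (B : Finset ℕ) : Fin d → ℤ :=
  fun k => fFun n d i ((k : ℕ) + 1) (nthElt B ((k : ℕ) + 1))

/-- A sparse composition of `p` of length `d+1`. -/
def IsSparseComposition (d p : ℕ) (c : Fin (d + 1) → ℕ) : Prop :=
  (∑ i, c i) = p ∧
  ∀ i : Fin (d + 1), 1 ≤ (i : ℕ) →
    c i = 0 ∨ c ⟨(i : ℕ) - 1, lt_of_le_of_lt (Nat.sub_le _ _) i.isLt⟩ = 0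

/-- The component `τ_i` of the `+`-component decomposition `Δ(τ)`:
the sign function whose `+`-set is `𝒞^τ_i`. -/
noncomputable def compFun (n d : ℕ) (τ : Finset ℕ → Bool) (i : ℕ) : Finset ℕ → Bool :=
  ofPlusSet (comp n d τ i)

/-- Keep the `i` smallest elements of `B` and shift the others by `ñ - n`
(this is `g⁻¹_{ñ,d,i} ∘ g_{n,d,i}` on `d`-subsets). -/
def gammaSet (n tn i : ℕ) (B : Finset ℕ) : Finset ℕ :=
  ((B.sort (· ≤ ·)).mapIdx fun k x => if k < i then x else x + tn - n).toFinset

/-- The map `h_{n,ñ,d,p,i}` on sign functions. -/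
noncomputable def hFun (n tn i : ℕ) (τ : Finset ℕ → Bool) : Finset ℕ → Bool :=
  ofPlusSet {A | ∃ B, τ B = true ∧ A = gammaSet n tn i B}

open Classical in
/-- `γ_{τ,ñ}(B)`: replace `b_j` by `b_j + ñ - n` whenever the `(τ,B,j)`-series is
right-aligned. -/
noncomputable def gammaFun (n tn : ℕ) (τ : Finset ℕ → Bool) (B : Finset ℕ) : Finset ℕ :=
  B.image fun x => if RightAligned (series n τ (B.erase x)) then x + tn - n else x

/-- The simple bijection `φ_{n,ñ,d,p}` on sign functions. -/
noncomputable def phiFun (n tn : ℕ) (τ : Finset ℕ → Bool) : Finset ℕ → Bool :=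
  ofPlusSet {A | ∃ B, τ B = true ∧ A = gammaFun n tn τ B}
namespace S13

lemma mem_of_getLast? {α : Type*} {l : List α} {b : α} (h : l.getLast? = some b) : b ∈ l := by
  obtain ⟨h', heq⟩ := List.mem_getLast?_eq_getLast (Option.mem_def.mpr h)
  subst heq; exact List.getLast_mem h'

lemma signChanges_cons_cons (a b : Bool) (l : List Bool) :
    signChanges (a :: b :: l) = (if a = b then 0 else 1) + signChanges (b :: l) := by
  by_cases h : a = b
  · simp [signChanges, h]
  · simp [signChanges, h, Nat.add_comm]

lemma signChanges_singleton (a : Bool) : signChanges [a] = 0 := by simp [signChanges]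

lemma signChanges_nil : signChanges [] = 0 := by simp [signChanges]

lemma sc_zero (a : Bool) (l : List Bool) (h : signChanges (a :: l) = 0) :
    ∀ b ∈ l, b = a := by
  induction l generalizing a with
  | nil => simp
  | cons c t ih =>
    rw [signChanges_cons_cons] at h
    by_cases hac : a = c
    · subst hac
      have h : signChanges (a :: t) = 0 := by simpa using h
      intro b hb
      rcases List.mem_cons.mp hb with rfl | hb
      · rfl
      · exact ih a h b hb
    · simp [hac] at h

lemma sc_getLast (l : List Bool) (hl : signChanges l ≤ 1) (b : Bool)
    (hlast : l.getLast? = some b) :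
    ∀ i j : ℕ, i ≤ j → l[i]? = some b → j < l.length → l[j]? = some b := by
  induction l with
  | nil => simp
  | cons a t ih =>
    intro i j hij hi hj
    match t, i, j with
    | [], 0, 0 => exact hi
    | [], i', j' =>
      have hj0 : j' = 0 := by simp only [List.length_cons, List.length_nil] at hj; omega
      have hi0 : i' = 0 := by omega
      subst hj0; subst hi0; exact hi
    | c :: t', 0, 0 => exact hi
    | c :: t', i+1, j+1 =>
      rw [signChanges_cons_cons] at hl
      simp only [List.getElem?_cons_succ] at hi ⊢
      refine ih (by omega) (by rwa [List.getLast?_cons_cons] at hlast) i j (by omega) hi ?_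
      simp only [List.length_cons] at hj ⊢; omega
    | c :: t', 0, j+1 =>
      simp only [List.getElem?_cons_zero, Option.some_inj] at hi
      subst hi
      rw [signChanges_cons_cons] at hl
      rw [List.getLast?_cons_cons] at hlast
      simp only [List.getElem?_cons_succ]
      by_cases hc : c = a
      · subst hc
        refine ih (by omega) hlast 0 j (by omega) (by simp) ?_
        simp only [List.length_cons] at hj ⊢; omega
      · exfalso
        have hac : ¬ (a = c) := fun h => hc h.symm
        have h0 : signChanges (c :: t') = 0 := by
          rw [if_neg hac] at hl; omega
        have hall := sc_zero c t' h0
        have hbmem : a ∈ c :: t' := mem_of_getLast? hlast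
        rcases List.mem_cons.mp hbmem with rfl | hmem
        · exact hc rfl
        · exact hc (hall _ hmem).symm

lemma sc_head (l : List Bool) (hl : signChanges l ≤ 1) (b : Bool)
    (hhead : l.head? = some b) :
    ∀ i j : ℕ, i ≤ j → l[j]? = some b → l[i]? = some b := by
  induction l with
  | nil => simp
  | cons a t ih =>
    intro i j hij hj
    have ha : a = b := by simpa using hhead
    subst ha
    match i, j with
    | 0, _ => simp
    | i+1, j+1 =>
      simp only [List.getElem?_cons_succ] at hj ⊢
      match t, hj with
      | c :: t', hj =>
        by_cases hc : c = a
        · subst hc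
          exact ih (by rw [signChanges_cons_cons] at hl; omega) (by simp) i j (by omega) hj
        · exfalso
          rw [signChanges_cons_cons] at hl
          have hac : ¬ (a = c) := fun h => hc h.symm
          have h0 : signChanges (c :: t') = 0 := by
            rw [if_neg hac] at hl; omega
          have hall := sc_zero c t' h0
          have hmem : a ∈ c :: t' := List.mem_of_getElem? hj
          rcases List.mem_cons.mp hmem with rfl | hmem
          · exact hc rfl
          · exact hc (hall _ hmem).symm

lemma sc_exists_flip (l : List Bool) (h1 : 1 ≤ signChanges l) (b : Bool)
    (hhead : l.head? = some b) : ∃ (k : ℕ) (x : Bool), l[k]? = some x ∧ x ≠ b := by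
  induction l with
  | nil => simp at hhead
  | cons a t ih =>
    have ha : a = b := by simpa using hhead
    subst ha
    match t with
    | [] => rw [signChanges_singleton] at h1; omega
    | c :: t' =>
      by_cases hc : c = a
      · subst hc
        rw [signChanges_cons_cons, if_pos rfl] at h1
        obtain ⟨k, x, hk, hx⟩ := ih (by omega) (by simp)
        refine ⟨k + 1, x, ?_, hx⟩
        simpa using hk
      · exact ⟨1, c, by simp, hc⟩

lemma sc_two (l : List Bool) (h : 2 ≤ signChanges l) :
    ∃ (i j k : ℕ) (x : Bool), i < j ∧ j < k ∧ l[i]? = some x ∧ l[j]? = some (!x) ∧ l[k]? = some x := by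
  induction l with
  | nil => rw [signChanges_nil] at h; omega
  | cons a t ih =>
    match t with
    | [] => rw [signChanges_singleton] at h; omega
    | c :: t' =>
      rw [signChanges_cons_cons] at h
      by_cases hc : a = c
      · subst hc
        rw [if_pos rfl] at h
        obtain ⟨i, j, k, x, hij, hjk, hi, hj, hk⟩ := ih (by omega)
        refine ⟨i+1, j+1, k+1, x, by omega, by omega, ?_, ?_, ?_⟩ <;> simpa
      · rw [if_neg hc] at h
        have h1 : 1 ≤ signChanges (c :: t') := by omega
        obtain ⟨k, x, hk, hx⟩ := sc_exists_flip _ h1 c (by simp)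
        have h1x : x = !c := Bool.eq_not_of_ne hx
        have h2x : a = !c := Bool.eq_not_of_ne hc
        have hk0 : k ≠ 0 := by
          intro h0; subst h0
          simp only [List.getElem?_cons_zero, Option.some_inj] at hk
          exact hx hk.symm
        refine ⟨0, 1, k+1, a, by omega, by omega, by simp, ?_, ?_⟩
        · simp only [List.getElem?_cons_succ, List.getElem?_cons_zero, Option.some_inj]
          rw [h2x, Bool.not_not]
        · simp only [List.getElem?_cons_succ]
          rw [hk, Option.some_inj, h1x, h2x]

end S13
namespace S13

/-- The domain of the series at `C`. -/
def dom (n : ℕ) (C : Finset ℕ) : Finset ℕ := Finset.Icc 1 n \ C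

lemma mem_dom {n : ℕ} {C : Finset ℕ} {x : ℕ} : x ∈ dom n C ↔ (1 ≤ x ∧ x ≤ n ∧ x ∉ C) := by
  simp [dom, Finset.mem_Icc, and_assoc]

lemma series_getElem? (n : ℕ) (τ : Finset ℕ → Bool) (C : Finset ℕ) (i : ℕ) :
    (series n τ C)[i]? = ((dom n C).sort (· ≤ ·))[i]?.map (fun x => τ (insert x C)) := by
  simp [series, dom]

lemma series_length (n : ℕ) (τ : Finset ℕ → Bool) (C : Finset ℕ) :
    (series n τ C).length = (dom n C).card := by
  simp [series, dom, Finset.length_sort]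

lemma sort_mem_of_getElem? {s : Finset ℕ} {i : ℕ} {x : ℕ}
    (h : (s.sort (· ≤ ·))[i]? = some x) : x ∈ s :=
  (Finset.mem_sort _).1 (List.mem_of_getElem? h)

lemma sort_lt_of_getElem? {s : Finset ℕ} {i j : ℕ} {x y : ℕ} (hij : i < j)
    (hi : (s.sort (· ≤ ·))[i]? = some x) (hj : (s.sort (· ≤ ·))[j]? = some y) : x < y := by
  have hs := Finset.sortedLT_sort s
  rw [List.getElem?_eq_some_iff] at hi hj
  obtain ⟨hi1, hi2⟩ := hi; obtain ⟨hj1, hj2⟩ := hj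
  subst hi2; subst hj2
  exact hs.strictMono_get (a := ⟨i, hi1⟩) (b := ⟨j, hj1⟩) hij

lemma sort_exists_index {s : Finset ℕ} {x : ℕ} (h : x ∈ s) :
    ∃ i : ℕ, (s.sort (· ≤ ·))[i]? = some x :=
  List.mem_iff_getElem?.mp ((Finset.mem_sort _).2 h)

lemma sort_index_le {s : Finset ℕ} {i j : ℕ} {x y : ℕ} (hxy : x ≤ y)
    (hi : (s.sort (· ≤ ·))[i]? = some x) (hj : (s.sort (· ≤ ·))[j]? = some y) : i ≤ j := by
  by_contra hc
  exact absurd (sort_lt_of_getElem? (by omega) hj hi) (by omega)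

lemma series_entry (n : ℕ) (τ : Finset ℕ → Bool) (C : Finset ℕ) {i : ℕ} {x : ℕ}
    (h : ((dom n C).sort (· ≤ ·))[i]? = some x) :
    (series n τ C)[i]? = some (τ (insert x C)) := by
  rw [series_getElem?, h]; rfl

lemma series_getLast? (n : ℕ) (τ : Finset ℕ → Bool) (C : Finset ℕ) (h : (dom n C).Nonempty) :
    (series n τ C).getLast? = some (τ (insert ((dom n C).max' h) C)) := by
  have hlen : 0 < ((dom n C).sort (· ≤ ·)).length := by
    rw [Finset.length_sort]; exact Finset.card_pos.2 h
  rw [List.getLast?_eq_getElem?, series_getElem?, series_length]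
  have hidx : ((dom n C).sort (· ≤ ·))[((dom n C).sort (· ≤ ·)).length - 1]? =
      some ((dom n C).max' h) := by
    rw [List.getElem?_eq_some_iff]
    exact ⟨by omega, Finset.sorted_last_eq_max'_aux _ (by omega) h⟩
  have hcl : (dom n C).card - 1 = ((dom n C).sort (· ≤ ·)).length - 1 := by
    rw [Finset.length_sort]
  rw [hcl, hidx]; rfl

lemma series_head? (n : ℕ) (τ : Finset ℕ → Bool) (C : Finset ℕ) (h : (dom n C).Nonempty) :
    (series n τ C).head? = some (τ (insert ((dom n C).min' h) C)) := by
  have hlen : 0 < ((dom n C).sort (· ≤ ·)).length := by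
    rw [Finset.length_sort]; exact Finset.card_pos.2 h
  rw [List.head?_eq_getElem?, series_getElem?]
  have : ((dom n C).sort (· ≤ ·))[(0:ℕ)]? = some ((dom n C).min' h) := by
    rw [List.getElem?_eq_some_iff]
    exact ⟨hlen, Finset.sorted_zero_eq_min'_aux _ hlen h⟩
  rw [this]; rfl

/-- Flood upward: at most one sign change, last entry `true`, a known `true` entry. -/
lemma flood_up {n : ℕ} {τ : Finset ℕ → Bool} {C : Finset ℕ}
    (hsc : signChanges (series n τ C) ≤ 1)
    (hlast : (series n τ C).getLast? = some true)
    {b y : ℕ} (hb : b ∈ dom n C) (hy : y ∈ dom n C) (hby : b ≤ y)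
    (hplus : τ (insert b C) = true) : τ (insert y C) = true := by
  obtain ⟨i, hi⟩ := sort_exists_index hb
  obtain ⟨j, hj⟩ := sort_exists_index hy
  have hij : i ≤ j := sort_index_le hby hi hj
  have hjlen : j < (series n τ C).length := by
    rw [series_length]
    have := (List.getElem?_eq_some_iff.1 hj).1
    rwa [Finset.length_sort] at this
  have := sc_getLast _ hsc true hlast i j hij
    (by rw [series_entry n τ C hi, hplus]) hjlen
  rw [series_entry n τ C hj] at this
  exact Option.some_inj.mp this

/-- Flood downward: head entry `true`, a known `true` entry. -/
lemma flood_down {n : ℕ} {τ : Finset ℕ → Bool} {C : Finset ℕ}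
    (hsc : signChanges (series n τ C) ≤ 1)
    (hhead : (series n τ C).head? = some true)
    {b y : ℕ} (hb : b ∈ dom n C) (hy : y ∈ dom n C) (hyb : y ≤ b)
    (hplus : τ (insert b C) = true) : τ (insert y C) = true := by
  obtain ⟨i, hi⟩ := sort_exists_index hy
  obtain ⟨j, hj⟩ := sort_exists_index hb
  have hij : i ≤ j := sort_index_le hyb hi hj
  have := sc_head _ hsc true hhead i j hij (by rw [series_entry n τ C hj, hplus])
  rw [series_entry n τ C hi] at this
  exact Option.some_inj.mp this

lemma not_ra_la {l : List Bool} (h1 : RightAligned l) (h2 : LeftAligned l) : False := by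
  rw [RightAligned] at h1; rw [LeftAligned] at h2
  rw [h1.1] at h2; exact absurd h2.1 (by simp)

end S13
namespace S13

/-- General-value flood upward. -/
lemma flood_up' {n : ℕ} {τ : Finset ℕ → Bool} {C : Finset ℕ} (v : Bool)
    (hsc : signChanges (series n τ C) ≤ 1)
    (hlast : (series n τ C).getLast? = some v)
    {b y : ℕ} (hb : b ∈ dom n C) (hy : y ∈ dom n C) (hby : b ≤ y)
    (hplus : τ (insert b C) = v) : τ (insert y C) = v := by
  obtain ⟨i, hi⟩ := sort_exists_index (s := dom n C) hb
  obtain ⟨j, hj⟩ := sort_exists_index (s := dom n C) hy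
  have hij : i ≤ j := sort_index_le hby hi hj
  have hjlen : j < (series n τ C).length := by
    rw [series_length]
    have := (List.getElem?_eq_some_iff.1 hj).1
    rwa [Finset.length_sort] at this
  have := sc_getLast _ hsc v hlast i j hij
    (by rw [series_entry n τ C hi, hplus]) hjlen
  rw [series_entry n τ C hj] at this
  exact Option.some_inj.mp this

/-- General-value flood downward. -/
lemma flood_down' {n : ℕ} {τ : Finset ℕ → Bool} {C : Finset ℕ} (v : Bool)
    (hsc : signChanges (series n τ C) ≤ 1)
    (hhead : (series n τ C).head? = some v)
    {b y : ℕ} (hb : b ∈ dom n C) (hy : y ∈ dom n C) (hyb : y ≤ b)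
    (hplus : τ (insert b C) = v) : τ (insert y C) = v := by
  obtain ⟨i, hi⟩ := sort_exists_index (s := dom n C) hy
  obtain ⟨j, hj⟩ := sort_exists_index (s := dom n C) hb
  have hij : i ≤ j := sort_index_le hyb hi hj
  have := sc_head _ hsc v hhead i j hij (by rw [series_entry n τ C hj, hplus])
  rw [series_entry n τ C hi] at this
  exact Option.some_inj.mp this

noncomputable def plusF (n : ℕ) (τ : Finset ℕ → Bool) : Finset (Finset ℕ) :=
  (Finset.Icc 1 n).powerset.filter (fun A => τ A = true)

lemma mem_plusF {n : ℕ} {τ : Finset ℕ → Bool} {A : Finset ℕ} :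
    A ∈ plusF n τ ↔ A ⊆ Finset.Icc 1 n ∧ τ A = true := by
  simp [plusF]

lemma plusCount_eq_card {n d : ℕ} {τ : Finset ℕ → Bool} (hτ : IsCoSignotope n d τ) :
    plusCount τ = (plusF n τ).card := by
  have hset : {A : Finset ℕ | τ A = true} = ↑(plusF n τ) := by
    ext A
    simp only [Set.mem_setOf_eq, Finset.coe_filter, plusF, Finset.mem_powerset]
    exact ⟨fun h => ⟨(hτ.1 A h).1, h⟩, fun h => h.2⟩
  rw [plusCount, hset, Set.ncard_coe_finset]

lemma dom_card {n : ℕ} {C : Finset ℕ} (hC : C ⊆ Finset.Icc 1 n) :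
    (dom n C).card + C.card = n := by
  rw [dom, Finset.card_sdiff_of_subset hC, Nat.card_Icc]
  have : C.card ≤ (Finset.Icc 1 n).card := Finset.card_le_card hC
  rw [Nat.card_Icc] at this
  omega

lemma sc_of {n d : ℕ} {τ : Finset ℕ → Bool} (hτ : IsCoSignotope n d τ) {C : Finset ℕ}
    (hC : C ⊆ Finset.Icc 1 n) (hcard : C.card + 1 = d) (hdn : d ≤ n) :
    signChanges (series n τ C) ≤ 1 := by
  have hdc := dom_card hC
  have hdom : (dom n C).Nonempty := by
    rw [← Finset.card_pos]; omega
  obtain ⟨b, hb⟩ := hdom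
  rw [mem_dom] at hb
  have hbC : b ∉ C := hb.2.2
  have := hτ.2 (insert b C)
    (Finset.insert_subset (Finset.mem_Icc.2 ⟨hb.1, hb.2.1⟩) hC)
    (by rw [Finset.card_insert_of_notMem hbC]; omega) b (Finset.mem_insert_self b C)
  rwa [Finset.erase_insert hbC] at this

lemma insert_inj_not_mem {D : Finset ℕ} {a b : ℕ} (ha : a ∉ D) (hb : b ∉ D)
    (h : insert a D = insert b D) : a = b := by
  have : a ∈ insert b D := h ▸ Finset.mem_insert_self a D
  rcases Finset.mem_insert.1 this with h' | h'
  · exact h'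
  · exact absurd h' ha

lemma card_image_insert {s D : Finset ℕ} (hs : ∀ x ∈ s, x ∉ D) :
    (s.image (fun u => insert u D)).card = s.card := by
  apply Finset.card_image_of_injOn
  intro a ha b hb hab
  exact insert_inj_not_mem (hs a ha) (hs b hb) hab

lemma image_insert_subset_plusF {n : ℕ} {τ : Finset ℕ → Bool} {D s : Finset ℕ}
    (hD : D ⊆ Finset.Icc 1 n) (hs : s ⊆ dom n D)
    (hall : ∀ u ∈ s, τ (insert u D) = true) :
    s.image (fun u => insert u D) ⊆ plusF n τ := by
  intro A hA
  obtain ⟨u, hu, rfl⟩ := Finset.mem_image.1 hA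
  have hud := mem_dom.1 (hs hu)
  rw [mem_plusF]
  exact ⟨Finset.insert_subset (Finset.mem_Icc.2 ⟨hud.1, hud.2.1⟩) hD, hall u hu⟩

lemma exists_minus {n d p : ℕ} {τ : Finset ℕ → Bool} (hτ : IsCoSignotope n d τ)
    (hp : plusCount τ ≤ p) (hpn : p + d ≤ n) {C : Finset ℕ}
    (hC : C ⊆ Finset.Icc 1 n) (hcard : C.card + 1 = d) :
    ∃ x ∈ dom n C, τ (insert x C) = false := by
  by_contra hcon
  push_neg at hcon
  have hall : ∀ u ∈ dom n C, τ (insert u C) = true := by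
    intro u hu
    have := hcon u hu
    simpa using this
  have hsub := image_insert_subset_plusF hC (Finset.Subset.refl _) hall
  have h1 : ((dom n C).image (fun u => insert u C)).card = (dom n C).card :=
    card_image_insert (fun x hx => (mem_dom.1 hx).2.2)
  have h2 := Finset.card_le_card hsub
  rw [h1] at h2
  rw [← plusCount_eq_card hτ] at h2
  have := dom_card hC
  omega

lemma count_up {n d p : ℕ} {τ : Finset ℕ → Bool} (hτ : IsCoSignotope n d τ)
    (hp : plusCount τ ≤ p) {D : Finset ℕ} (hD : D ⊆ Finset.Icc 1 n)
    {r : ℕ} (hr : r ∈ dom n D)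
    (hall : ∀ u ∈ dom n D, r ≤ u → τ (insert u D) = true) :
    n + 1 ≤ p + r + (D ∩ Finset.Icc r n).card := by
  have hrd := mem_dom.1 hr
  have hsub1 : Finset.Icc r n \ D ⊆ dom n D := by
    intro u hu
    rw [Finset.mem_sdiff, Finset.mem_Icc] at hu
    exact mem_dom.2 ⟨by omega, hu.1.2, hu.2⟩
  have hsub := image_insert_subset_plusF hD hsub1
    (fun u hu => hall u (hsub1 hu) (Finset.mem_Icc.1 (Finset.mem_sdiff.1 hu).1).1)
  have h1 : ((Finset.Icc r n \ D).image (fun u => insert u D)).card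
      = (Finset.Icc r n \ D).card :=
    card_image_insert (fun x hx => (Finset.mem_sdiff.1 hx).2)
  have h2 := Finset.card_le_card hsub
  rw [h1, ← plusCount_eq_card hτ] at h2
  have h3 : (Finset.Icc r n \ D).card + (Finset.Icc r n ∩ D).card
      = (Finset.Icc r n).card := Finset.card_sdiff_add_card_inter _ _
  rw [Nat.card_Icc] at h3
  rw [Finset.inter_comm] at h3
  omega

lemma count_down {n d p : ℕ} {τ : Finset ℕ → Bool} (hτ : IsCoSignotope n d τ)
    (hp : plusCount τ ≤ p) {D : Finset ℕ} (hD : D ⊆ Finset.Icc 1 n)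
    {l : ℕ} (hl : l ∈ dom n D)
    (hall : ∀ u ∈ dom n D, u ≤ l → τ (insert u D) = true) :
    l ≤ p + (D ∩ Finset.Icc 1 l).card := by
  have hld := mem_dom.1 hl
  have hsub1 : Finset.Icc 1 l \ D ⊆ dom n D := by
    intro u hu
    rw [Finset.mem_sdiff, Finset.mem_Icc] at hu
    exact mem_dom.2 ⟨hu.1.1, by omega, hu.2⟩
  have hsub := image_insert_subset_plusF hD hsub1
    (fun u hu => hall u (hsub1 hu) (Finset.mem_Icc.1 (Finset.mem_sdiff.1 hu).1).2)
  have h1 : ((Finset.Icc 1 l \ D).image (fun u => insert u D)).card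
      = (Finset.Icc 1 l \ D).card :=
    card_image_insert (fun x hx => (Finset.mem_sdiff.1 hx).2)
  have h2 := Finset.card_le_card hsub
  rw [h1, ← plusCount_eq_card hτ] at h2
  have h3 : (Finset.Icc 1 l \ D).card + (Finset.Icc 1 l ∩ D).card
      = (Finset.Icc 1 l).card := Finset.card_sdiff_add_card_inter _ _
  rw [Nat.card_Icc] at h3
  rw [Finset.inter_comm] at h3
  omega

lemma count_pair {n d p : ℕ} {τ : Finset ℕ → Bool} (hτ : IsCoSignotope n d τ)
    (hp : plusCount τ ≤ p)
    {D1 D3 : Finset ℕ} (h1 : D1 ⊆ Finset.Icc 1 n) (h3 : D3 ⊆ Finset.Icc 1 n)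
    (hcard : D1.card = D3.card) (hne : D1 ≠ D3)
    {r l : ℕ} (hr : r ∈ dom n D1) (hl : l ∈ dom n D3)
    (hup : ∀ u ∈ dom n D1, r ≤ u → τ (insert u D1) = true)
    (hdown : ∀ u ∈ dom n D3, u ≤ l → τ (insert u D3) = true) :
    n + 1 + l ≤ p + r + (D1 ∩ Finset.Icc r n).card + (D3 ∩ Finset.Icc 1 l).card ∨
    (n + 1 + l ≤ p + 1 + r + (D1 ∩ Finset.Icc r n).card + (D3 ∩ Finset.Icc 1 l).card ∧
      ∃ u v : ℕ, u ∈ D3 ∧ u ∉ D1 ∧ r ≤ u ∧ v ∈ D1 ∧ v ∉ D3 ∧ v ≤ l) := by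
  classical
  have hrd := mem_dom.1 hr
  have hld := mem_dom.1 hl
  set F1 := (Finset.Icc r n \ D1).image (fun u => insert u D1) with hF1
  set F3 := (Finset.Icc 1 l \ D3).image (fun u => insert u D3) with hF3
  have hsub1 : Finset.Icc r n \ D1 ⊆ dom n D1 := by
    intro u hu
    rw [Finset.mem_sdiff, Finset.mem_Icc] at hu
    exact mem_dom.2 ⟨by omega, hu.1.2, hu.2⟩
  have hsub3 : Finset.Icc 1 l \ D3 ⊆ dom n D3 := by
    intro u hu
    rw [Finset.mem_sdiff, Finset.mem_Icc] at hu
    exact mem_dom.2 ⟨hu.1.1, by omega, hu.2⟩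
  have hF1p : F1 ⊆ plusF n τ := image_insert_subset_plusF h1 hsub1
    (fun u hu => hup u (hsub1 hu) (Finset.mem_Icc.1 (Finset.mem_sdiff.1 hu).1).1)
  have hF3p : F3 ⊆ plusF n τ := image_insert_subset_plusF h3 hsub3
    (fun u hu => hdown u (hsub3 hu) (Finset.mem_Icc.1 (Finset.mem_sdiff.1 hu).1).2)
  have hc1 : F1.card = (Finset.Icc r n \ D1).card :=
    card_image_insert (fun x hx => (Finset.mem_sdiff.1 hx).2)
  have hc3 : F3.card = (Finset.Icc 1 l \ D3).card :=
    card_image_insert (fun x hx => (Finset.mem_sdiff.1 hx).2)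
  have hid1 : (Finset.Icc r n \ D1).card + (Finset.Icc r n ∩ D1).card
      = (Finset.Icc r n).card := Finset.card_sdiff_add_card_inter _ _
  have hid3 : (Finset.Icc 1 l \ D3).card + (Finset.Icc 1 l ∩ D3).card
      = (Finset.Icc 1 l).card := Finset.card_sdiff_add_card_inter _ _
  rw [Nat.card_Icc, Finset.inter_comm] at hid1 hid3
  have hunion : (F1 ∪ F3).card ≤ p := by
    calc (F1 ∪ F3).card ≤ (plusF n τ).card :=
          Finset.card_le_card (Finset.union_subset hF1p hF3p)
    _ = plusCount τ := (plusCount_eq_card hτ).symm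
    _ ≤ p := hp
  have hie : F1.card + F3.card = (F1 ∪ F3).card + (F1 ∩ F3).card :=
    (Finset.card_union_add_card_inter F1 F3).symm
  rcases Finset.eq_empty_or_nonempty (F1 ∩ F3) with hemp | ⟨A, hA⟩
  · left
    rw [hemp] at hie
    simp at hie
    omega
  · right
    have hAdata : ∀ A' ∈ F1 ∩ F3, ∃ u v : ℕ, u ∈ D3 ∧ u ∉ D1 ∧ r ≤ u ∧ u ≤ n ∧
        v ∈ D1 ∧ v ∉ D3 ∧ 1 ≤ v ∧ v ≤ l ∧ A' = insert u D1 ∧ A' = insert v D3 := by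
      intro A' hA'
      obtain ⟨hA1, hA3⟩ := Finset.mem_inter.1 hA'
      obtain ⟨u, hu, hu2⟩ := Finset.mem_image.1 hA1
      obtain ⟨v, hv, hv2⟩ := Finset.mem_image.1 hA3
      rw [Finset.mem_sdiff, Finset.mem_Icc] at hu hv
      have huv : u ≠ v := by
        intro h
        subst h
        apply hne
        have h12 : insert u D1 = insert u D3 := hu2.trans hv2.symm
        have : (insert u D1).erase u = (insert u D3).erase u := by rw [h12]
        rwa [Finset.erase_insert hu.2, Finset.erase_insert hv.2] at this
      have huD3 : u ∈ D3 := by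
        have hmem : u ∈ A' := by rw [← hu2]; exact Finset.mem_insert_self u D1
        rw [← hv2] at hmem
        rcases Finset.mem_insert.1 hmem with h | h
        · exact absurd h huv
        · exact h
      have hvD1 : v ∈ D1 := by
        have hmem : v ∈ A' := by rw [← hv2]; exact Finset.mem_insert_self v D3
        rw [← hu2] at hmem
        rcases Finset.mem_insert.1 hmem with h | h
        · exact absurd h.symm huv
        · exact h
      exact ⟨u, v, huD3, hu.2, hu.1.1, hu.1.2, hvD1, hv.2, hv.1.1, hv.1.2, hu2.symm, hv2.symm⟩
    have hinter1 : (F1 ∩ F3).card ≤ 1 := by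
      have hsub : F1 ∩ F3 ⊆ {D1 ∪ D3} := by
        intro A' hA'
        obtain ⟨u, v, huD3, huD1, _, _, hvD1, hvD3, _, _, he1, he3⟩ := hAdata A' hA'
        rw [Finset.mem_singleton]
        have hsup : D1 ∪ D3 ⊆ A' := by
          rw [he1]
          intro w hw
          rcases Finset.mem_union.1 hw with h | h
          · exact Finset.mem_insert_of_mem h
          · rw [← he1, he3]
            exact Finset.mem_insert_of_mem h
        have hcardA : A'.card = D1.card + 1 := by
          rw [he1, Finset.card_insert_of_notMem huD1]
        have hwit : insert u D1 ⊆ D1 ∪ D3 := by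
          intro w hw
          rcases Finset.mem_insert.1 hw with rfl | h
          · exact Finset.mem_union_right _ huD3
          · exact Finset.mem_union_left _ h
        have hclow : D1.card + 1 ≤ (D1 ∪ D3).card := by
          have := Finset.card_le_card hwit
          rwa [Finset.card_insert_of_notMem huD1] at this
        exact (Finset.eq_of_subset_of_card_le hsup (by omega)).symm
      calc (F1 ∩ F3).card ≤ ({D1 ∪ D3} : Finset (Finset ℕ)).card := Finset.card_le_card hsub
        _ = 1 := Finset.card_singleton _
    obtain ⟨u, v, huD3, huD1, hru, _, hvD1, hvD3, _, hvl, _, _⟩ := hAdata A hA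
    exact ⟨by omega, u, v, huD3, huD1, hru, hvD1, hvD3, hvl⟩

end S13
namespace S13

/-- `x` is right-aligned in `B` (w.r.t. `τ` on `[n]`). -/
def RAof (n : ℕ) (τ : Finset ℕ → Bool) (B : Finset ℕ) (x : ℕ) : Prop :=
  RightAligned (series n τ (B.erase x))

/-- `x` is left-aligned in `B`. -/
def LAof (n : ℕ) (τ : Finset ℕ → Bool) (B : Finset ℕ) (x : ℕ) : Prop :=
  LeftAligned (series n τ (B.erase x))

section Kit

variable {n d p : ℕ} {τ : Finset ℕ → Bool}

lemma ra_or_la (hτ : IsCoSignotope n d τ) (hp : plusCount τ ≤ p) (hpn : p + d ≤ n)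
    {C : Finset ℕ} (hC : C ⊆ Finset.Icc 1 n) (hcard : C.card + 1 = d)
    (hplus : ∃ b ∈ dom n C, τ (insert b C) = true) :
    RightAligned (series n τ C) ∨ LeftAligned (series n τ C) := by
  have hsc := sc_of hτ hC hcard (by omega)
  obtain ⟨b, hb, hbp⟩ := hplus
  obtain ⟨c, hc, hcm⟩ := exists_minus hτ hp hpn hC hcard
  have hne : (dom n C).Nonempty := ⟨b, hb⟩
  have hh := series_head? n τ C hne
  have hl := series_getLast? n τ C hne
  have hmm : (dom n C).min' hne ∈ dom n C := Finset.min'_mem _ _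
  have hMM : (dom n C).max' hne ∈ dom n C := Finset.max'_mem _ _
  cases hm : τ (insert ((dom n C).min' hne) C) <;>
    cases hM : τ (insert ((dom n C).max' hne) C)
  · exfalso
    have := flood_down' false hsc (by rw [hh, hm]) hMM hb (Finset.le_max' _ _ hb) hM
    simp [hbp] at this
  · left; exact ⟨by rw [hh, hm], by rw [hl, hM]⟩
  · right; exact ⟨by rw [hh, hm], by rw [hl, hM]⟩
  · exfalso
    have := flood_up' true hsc (by rw [hl, hM]) hmm hc (Finset.min'_le _ _ hc) hm
    simp [hcm] at this

lemma ra_iff_max (hτ : IsCoSignotope n d τ) (hp : plusCount τ ≤ p) (hpn : p + d ≤ n)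
    {C : Finset ℕ} (hC : C ⊆ Finset.Icc 1 n) (hcard : C.card + 1 = d)
    (hne : (dom n C).Nonempty)
    (hplus : ∃ b ∈ dom n C, τ (insert b C) = true) :
    RightAligned (series n τ C) ↔ τ (insert ((dom n C).max' hne) C) = true := by
  have hl := series_getLast? n τ C hne
  constructor
  · intro hra
    have := hra.2
    rw [hl] at this
    exact Option.some_inj.mp this
  · intro hM
    rcases ra_or_la hτ hp hpn hC hcard hplus with h | h
    · exact h
    · exfalso
      have := h.2
      rw [hl, hM] at this
      simp at this

lemma la_iff_min (hτ : IsCoSignotope n d τ) (hp : plusCount τ ≤ p) (hpn : p + d ≤ n)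
    {C : Finset ℕ} (hC : C ⊆ Finset.Icc 1 n) (hcard : C.card + 1 = d)
    (hne : (dom n C).Nonempty)
    (hplus : ∃ b ∈ dom n C, τ (insert b C) = true) :
    LeftAligned (series n τ C) ↔ τ (insert ((dom n C).min' hne) C) = true := by
  have hh := series_head? n τ C hne
  constructor
  · intro hla
    have := hla.1
    rw [hh] at this
    exact Option.some_inj.mp this
  · intro hm
    rcases ra_or_la hτ hp hpn hC hcard hplus with h | h
    · exfalso
      have := h.1
      rw [hh, hm] at this
      simp at this
    · exact h

/-- Facts about `B.erase x` for `x ∈ B`, `B` a plus subset. -/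
lemma erase_facts (hτ : IsCoSignotope n d τ) {B : Finset ℕ} {x : ℕ}
    (hB : τ B = true) (hx : x ∈ B) :
    B.erase x ⊆ Finset.Icc 1 n ∧ (B.erase x).card + 1 = d ∧
      x ∈ dom n (B.erase x) ∧ insert x (B.erase x) = B := by
  obtain ⟨hBI, hBc⟩ := hτ.1 B hB
  have h1 : B.erase x ⊆ Finset.Icc 1 n := (Finset.erase_subset _ _).trans hBI
  have h2 : (B.erase x).card + 1 = d := by
    rw [Finset.card_erase_of_mem hx]
    have : 1 ≤ B.card := Finset.card_pos.2 ⟨x, hx⟩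
    omega
  have h3 : x ∈ dom n (B.erase x) := by
    rw [mem_dom]
    have := Finset.mem_Icc.1 (hBI hx)
    exact ⟨this.1, this.2, Finset.notMem_erase _ _⟩
  exact ⟨h1, h2, h3, Finset.insert_erase hx⟩

lemma align_or (hτ : IsCoSignotope n d τ) (hp : plusCount τ ≤ p) (hpn : p + d ≤ n)
    {B : Finset ℕ} {x : ℕ} (hB : τ B = true) (hx : x ∈ B) :
    RAof n τ B x ∨ LAof n τ B x := by
  obtain ⟨h1, h2, h3, h4⟩ := erase_facts hτ hB hx
  exact ra_or_la hτ hp hpn h1 h2 ⟨x, h3, by rw [h4]; exact hB⟩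

lemma la_of_not_ra (hτ : IsCoSignotope n d τ) (hp : plusCount τ ≤ p) (hpn : p + d ≤ n)
    {B : Finset ℕ} {x : ℕ} (hB : τ B = true) (hx : x ∈ B) (h : ¬ RAof n τ B x) :
    LAof n τ B x := by
  rcases align_or hτ hp hpn hB hx with h' | h'
  · exact absurd h' h
  · exact h'

lemma not_ra_of_la {B : Finset ℕ} {x : ℕ} (h : LAof n τ B x) : ¬ RAof n τ B x :=
  fun h' => not_ra_la h' h

/-- Flood for a right-aligned slot. -/
lemma ra_flood (hτ : IsCoSignotope n d τ) {B : Finset ℕ} {x : ℕ}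
    (hB : τ B = true) (hx : x ∈ B) (hra : RAof n τ B x)
    {y : ℕ} (hy : y ∈ dom n (B.erase x)) (hxy : x ≤ y) :
    τ (insert y (B.erase x)) = true := by
  obtain ⟨h1, h2, h3, h4⟩ := erase_facts hτ hB hx
  have hd : d ≤ n := by
    have := dom_card h1
    have : (dom n (B.erase x)).Nonempty := ⟨x, h3⟩
    have := Finset.card_pos.2 this
    omega
  exact flood_up' true (sc_of hτ h1 h2 hd) hra.2 h3 hy hxy (by rw [h4]; exact hB)

/-- Flood for a left-aligned slot. -/
lemma la_flood (hτ : IsCoSignotope n d τ) {B : Finset ℕ} {x : ℕ}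
    (hB : τ B = true) (hx : x ∈ B) (hla : LAof n τ B x)
    {y : ℕ} (hy : y ∈ dom n (B.erase x)) (hxy : y ≤ x) :
    τ (insert y (B.erase x)) = true := by
  obtain ⟨h1, h2, h3, h4⟩ := erase_facts hτ hB hx
  have hd : d ≤ n := by
    have := dom_card h1
    have : (dom n (B.erase x)).Nonempty := ⟨x, h3⟩
    have := Finset.card_pos.2 this
    omega
  exact flood_down' true (sc_of hτ h1 h2 hd) hla.1 h3 hy hxy (by rw [h4]; exact hB)

/-- The pattern lemma: right-aligned slots propagate upwards within a plus subset. -/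
lemma pattern (hτ : IsCoSignotope n d τ) (hp : plusCount τ ≤ p) (hpn : p + d ≤ n)
    {B : Finset ℕ} {x x' : ℕ} (hB : τ B = true) (hx : x ∈ B) (hx' : x' ∈ B)
    (hlt : x < x') (hra : RAof n τ B x) : RAof n τ B x' := by
  by_contra hra'
  have hla' : LAof n τ B x' := la_of_not_ra hτ hp hpn hB hx' hra'
  obtain ⟨h1, h2, h3, h4⟩ := erase_facts hτ hB hx
  obtain ⟨h1', h2', h3', h4'⟩ := erase_facts hτ hB hx'
  have hne : B.erase x ≠ B.erase x' := by
    intro h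
    have : x' ∈ B.erase x := Finset.mem_erase.2 ⟨by omega, hx'⟩
    rw [h] at this
    exact Finset.notMem_erase _ _ this
  have hcp := count_pair hτ hp h1 h1' (by omega) hne h3 h3'
    (fun u hu hru => ra_flood hτ hB hx hra hu hru)
    (fun u hu hul => la_flood hτ hB hx' hla' hu hul)
  -- bound the two intersection cardinalities
  have hS1 : B.erase x ∩ Finset.Icc x n ⊆ B := fun w hw =>
    Finset.mem_of_mem_erase (Finset.mem_inter.1 hw).1
  have hS2 : B.erase x' ∩ Finset.Icc 1 x' ⊆ B := fun w hw =>
    Finset.mem_of_mem_erase (Finset.mem_inter.1 hw).1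
  have hIcup : (B.erase x ∩ Finset.Icc x n) ∪ (B.erase x' ∩ Finset.Icc 1 x') ⊆ B :=
    Finset.union_subset hS1 hS2
  have hIcap : (B.erase x ∩ Finset.Icc x n) ∩ (B.erase x' ∩ Finset.Icc 1 x')
      ⊆ Finset.Ioo x x' := by
    intro w hw
    rw [Finset.mem_inter, Finset.mem_inter, Finset.mem_inter, Finset.mem_erase,
      Finset.mem_erase, Finset.mem_Icc, Finset.mem_Icc] at hw
    rw [Finset.mem_Ioo]
    obtain ⟨⟨⟨hw1, _⟩, hw2, _⟩, ⟨hw3, _⟩, _, hw4⟩ := hw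
    omega
  have hsum : (B.erase x ∩ Finset.Icc x n).card + (B.erase x' ∩ Finset.Icc 1 x').card
      ≤ d + (x' - x - 1) := by
    have e1 := Finset.card_union_add_card_inter (B.erase x ∩ Finset.Icc x n)
      (B.erase x' ∩ Finset.Icc 1 x')
    have e2 := Finset.card_le_card hIcup
    have e3 := Finset.card_le_card hIcap
    rw [Nat.card_Ioo] at e3
    have e4 : B.card = d := (hτ.1 B hB).2
    omega
  rcases hcp with h | ⟨h, _⟩ <;> omega

/-- The 2D lemma, contradiction form: a slot `c` of the base cannot be right-aligned in
one extension and left-aligned in another. -/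
lemma twoD_aux (hτ : IsCoSignotope n d τ) (hp : plusCount τ ≤ p) (hpn : p + d ≤ n)
    {C : Finset ℕ} {c u v : ℕ} (hC : C ⊆ Finset.Icc 1 n) (hcard : C.card + 1 = d)
    (hc : c ∈ C) (hu : u ∈ dom n C) (hv : v ∈ dom n C)
    (hup : τ (insert u C) = true) (hvp : τ (insert v C) = true)
    (hra : RAof n τ (insert u C) c) (hla : LAof n τ (insert v C) c) : False := by
  have huC : u ∉ C := (mem_dom.1 hu).2.2
  have hvC : v ∉ C := (mem_dom.1 hv).2.2
  have hcu : c ≠ u := fun h => huC (h ▸ hc)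
  have hcv : c ≠ v := fun h => hvC (h ▸ hc)
  have heu : (insert u C).erase c = insert u (C.erase c) := by
    rw [Finset.erase_insert_of_ne (fun h => hcu h.symm)]
  have hev : (insert v C).erase c = insert v (C.erase c) := by
    rw [Finset.erase_insert_of_ne (fun h => hcv h.symm)]
  by_cases huv : u = v
  · subst huv
    rw [RAof] at hra; rw [LAof] at hla
    exact not_ra_la hra hla
  -- set up count_pair with D1 = insert u (C.erase c), D3 = insert v (C.erase c), r = l = c
  set D1 := insert u (C.erase c) with hD1
  set D3 := insert v (C.erase c) with hD3
  have hCec : C.erase c ⊆ Finset.Icc 1 n := (Finset.erase_subset _ _).trans hC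
  have hD1I : D1 ⊆ Finset.Icc 1 n := by
    rw [hD1]
    exact Finset.insert_subset (Finset.mem_Icc.2 ⟨(mem_dom.1 hu).1, (mem_dom.1 hu).2.1⟩) hCec
  have hD3I : D3 ⊆ Finset.Icc 1 n := by
    rw [hD3]
    exact Finset.insert_subset (Finset.mem_Icc.2 ⟨(mem_dom.1 hv).1, (mem_dom.1 hv).2.1⟩) hCec
  have huec : u ∉ C.erase c := fun h => huC (Finset.mem_of_mem_erase h)
  have hvec : v ∉ C.erase c := fun h => hvC (Finset.mem_of_mem_erase h)
  have hD1c : D1.card = (C.erase c).card + 1 := Finset.card_insert_of_notMem huec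
  have hD3c : D3.card = (C.erase c).card + 1 := Finset.card_insert_of_notMem hvec
  have hneD : D1 ≠ D3 := by
    intro h
    have : u ∈ D3 := h ▸ Finset.mem_insert_self u (C.erase c)
    rcases Finset.mem_insert.1 this with h' | h'
    · exact huv h'
    · exact huec h'
  have hcD1 : c ∈ dom n D1 := by
    rw [mem_dom]
    have := Finset.mem_Icc.1 (hC hc)
    exact ⟨this.1, this.2, by
      rw [hD1, Finset.mem_insert]
      push_neg
      exact ⟨hcu, Finset.notMem_erase _ _⟩⟩
  have hcD3 : c ∈ dom n D3 := by
    rw [mem_dom]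
    have := Finset.mem_Icc.1 (hC hc)
    exact ⟨this.1, this.2, by
      rw [hD3, Finset.mem_insert]
      push_neg
      exact ⟨hcv, Finset.notMem_erase _ _⟩⟩
  have hicD1 : insert c D1 = insert u C := by
    rw [hD1, Finset.insert_comm, Finset.insert_erase hc]
  have hicD3 : insert c D3 = insert v C := by
    rw [hD3, Finset.insert_comm, Finset.insert_erase hc]
  -- floods
  have hupf : ∀ w ∈ dom n D1, c ≤ w → τ (insert w D1) = true := by
    intro w hw hcw
    have hy : w ∈ dom n ((insert u C).erase c) := by rw [heu]; exact hw
    have := ra_flood hτ hup (Finset.mem_insert_of_mem hc) hra hy hcw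
    rwa [heu] at this
  have hdownf : ∀ w ∈ dom n D3, w ≤ c → τ (insert w D3) = true := by
    intro w hw hwc
    have hy : w ∈ dom n ((insert v C).erase c) := by rw [hev]; exact hw
    have := la_flood hτ hvp (Finset.mem_insert_of_mem hc) hla hy hwc
    rwa [hev] at this
  have hcp := count_pair hτ hp hD1I hD3I (by omega) hneD hcD1 hcD3 hupf hdownf
  -- cardinality bookkeeping
  set s := (C.erase c ∩ Finset.Icc 1 c).card with hs
  set t := (C.erase c ∩ Finset.Icc c n).card with ht
  have hst : s + t ≤ (C.erase c).card := by
    have hdisj : (C.erase c ∩ Finset.Icc 1 c) ∩ (C.erase c ∩ Finset.Icc c n) = ∅ := by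
      rw [Finset.eq_empty_iff_forall_notMem]
      intro w hw
      simp only [Finset.mem_inter, Finset.mem_erase, Finset.mem_Icc] at hw
      obtain ⟨⟨⟨hw1, _⟩, _, hw2⟩, _, hw3, _⟩ := hw
      omega
    have hsub : (C.erase c ∩ Finset.Icc 1 c) ∪ (C.erase c ∩ Finset.Icc c n) ⊆ C.erase c :=
      Finset.union_subset Finset.inter_subset_left Finset.inter_subset_left
    have := Finset.card_union_add_card_inter (C.erase c ∩ Finset.Icc 1 c)
      (C.erase c ∩ Finset.Icc c n)
    rw [hdisj, Finset.card_empty] at this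
    have h2 := Finset.card_le_card hsub
    omega
  have hCc : (C.erase c).card + 1 = C.card := by
    rw [Finset.card_erase_of_mem hc]
    have : 1 ≤ C.card := Finset.card_pos.2 ⟨c, hc⟩
    omega
  have halpha : (D1 ∩ Finset.Icc c n).card ≤ t + 1 := by
    have hsub : D1 ∩ Finset.Icc c n ⊆ insert u (C.erase c ∩ Finset.Icc c n) := by
      intro w hw
      rw [Finset.mem_inter, hD1, Finset.mem_insert] at hw
      rcases hw.1 with rfl | h
      · exact Finset.mem_insert_self _ _
      · exact Finset.mem_insert_of_mem (Finset.mem_inter.2 ⟨h, hw.2⟩)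
    calc (D1 ∩ Finset.Icc c n).card ≤ _ := Finset.card_le_card hsub
      _ ≤ t + 1 := Finset.card_insert_le _ _
  have hbeta : (D3 ∩ Finset.Icc 1 c).card ≤ s + 1 := by
    have hsub : D3 ∩ Finset.Icc 1 c ⊆ insert v (C.erase c ∩ Finset.Icc 1 c) := by
      intro w hw
      rw [Finset.mem_inter, hD3, Finset.mem_insert] at hw
      rcases hw.1 with rfl | h
      · exact Finset.mem_insert_self _ _
      · exact Finset.mem_insert_of_mem (Finset.mem_inter.2 ⟨h, hw.2⟩)
    calc (D3 ∩ Finset.Icc 1 c).card ≤ _ := Finset.card_le_card hsub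
      _ ≤ s + 1 := Finset.card_insert_le _ _
  rcases hcp with h | ⟨h, u', v', hu'D3, hu'D1, hcu', hv'D1, hv'D3, hv'c⟩
  · omega
  · -- overlap case : u' = v with c < v, v' = u with u < c
    have hu'v : u' = v := by
      rw [hD3, Finset.mem_insert] at hu'D3
      rcases hu'D3 with h' | h'
      · exact h'
      · exact absurd (by rw [hD1]; exact Finset.mem_insert_of_mem h') hu'D1
    have hv'u : v' = u := by
      rw [hD1, Finset.mem_insert] at hv'D1
      rcases hv'D1 with h' | h'
      · exact h'
      · exact absurd (by rw [hD3]; exact Finset.mem_insert_of_mem h') hv'D3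
    subst hu'v; subst hv'u
    have hcltv : c < u' := lt_of_le_of_ne hcu' (fun h => hcv h)
    have hultc : v' < c := lt_of_le_of_ne hv'c (fun h => hcu h.symm)
    have halpha' : (D1 ∩ Finset.Icc c n).card ≤ t := by
      have hsub : D1 ∩ Finset.Icc c n ⊆ C.erase c ∩ Finset.Icc c n := by
        intro w hw
        rw [Finset.mem_inter, hD1, Finset.mem_insert] at hw
        rcases hw.1 with rfl | h
        · exfalso
          have := (Finset.mem_Icc.1 hw.2).1
          omega
        · exact Finset.mem_inter.2 ⟨h, hw.2⟩
      exact Finset.card_le_card hsub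
    have hbeta' : (D3 ∩ Finset.Icc 1 c).card ≤ s := by
      have hsub : D3 ∩ Finset.Icc 1 c ⊆ C.erase c ∩ Finset.Icc 1 c := by
        intro w hw
        rw [Finset.mem_inter, hD3, Finset.mem_insert] at hw
        rcases hw.1 with rfl | h
        · exfalso
          have := (Finset.mem_Icc.1 hw.2).2
          omega
        · exact Finset.mem_inter.2 ⟨h, hw.2⟩
      exact Finset.card_le_card hsub
    omega

/-- The 2D lemma: the alignment of a base slot is the same in any two plus extensions. -/
lemma twoD (hτ : IsCoSignotope n d τ) (hp : plusCount τ ≤ p) (hpn : p + d ≤ n)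
    {C : Finset ℕ} {c u v : ℕ} (hC : C ⊆ Finset.Icc 1 n) (hcard : C.card + 1 = d)
    (hc : c ∈ C) (hu : u ∈ dom n C) (hv : v ∈ dom n C)
    (hup : τ (insert u C) = true) (hvp : τ (insert v C) = true) :
    RAof n τ (insert u C) c ↔ RAof n τ (insert v C) c := by
  constructor <;> intro h <;> by_contra h'
  · exact twoD_aux hτ hp hpn hC hcard hc hu hv hup hvp h
      (la_of_not_ra hτ hp hpn hvp (Finset.mem_insert_of_mem hc) h')
  · exact twoD_aux hτ hp hpn hC hcard hc hv hu hvp hup h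
      (la_of_not_ra hτ hp hpn hup (Finset.mem_insert_of_mem hc) h')

end Kit
end S13
namespace S13

open Classical in
/-- The element map underlying `gammaFun`. -/
noncomputable def fal (n tn : ℕ) (τ : Finset ℕ → Bool) (B : Finset ℕ) (x : ℕ) : ℕ :=
  if RAof n τ B x then x + tn - n else x

lemma gammaFun_eq (n tn : ℕ) (τ : Finset ℕ → Bool) (B : Finset ℕ) :
    gammaFun n tn τ B = B.image (fal n tn τ B) := by
  unfold gammaFun fal RAof
  apply Finset.image_congr
  intro x _
  by_cases h : RightAligned (series n τ (B.erase x)) <;> simp [h]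

section GKit

variable {n tn d p : ℕ} {τ : Finset ℕ → Bool}

lemma fal_ra {B : Finset ℕ} {x : ℕ} (h : RAof n τ B x) :
    fal n tn τ B x = x + tn - n := by rw [fal, if_pos h]

lemma fal_la {B : Finset ℕ} {x : ℕ} (h : ¬ RAof n τ B x) :
    fal n tn τ B x = x := by rw [fal, if_neg h]

lemma ra_ge (hτ : IsCoSignotope n d τ) (hp : plusCount τ ≤ p) (hptn : p + d ≤ tn)
    {B : Finset ℕ} {x : ℕ} (hB : τ B = true) (hx : x ∈ B) (hra : RAof n τ B x) :
    n + 2 ≤ x + tn := by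
  obtain ⟨h1, h2, h3, h4⟩ := erase_facts hτ hB hx
  have hcu := count_up hτ hp h1 h3 (fun u hu hru => by
    have := ra_flood hτ hB hx hra hu hru
    exact this)
  have hcard : (B.erase x ∩ Finset.Icc x n).card ≤ (B.erase x).card :=
    Finset.card_le_card Finset.inter_subset_left
  omega

lemma la_le (hτ : IsCoSignotope n d τ) (hp : plusCount τ ≤ p)
    {B : Finset ℕ} {x : ℕ} (hB : τ B = true) (hx : x ∈ B) (hla : LAof n τ B x) :
    x + 1 ≤ p + d := by
  obtain ⟨h1, h2, h3, h4⟩ := erase_facts hτ hB hx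
  have hcd := count_down hτ hp h1 h3 (fun u hu hul => by
    have := la_flood hτ hB hx hla hu hul
    exact this)
  have hcard : (B.erase x ∩ Finset.Icc 1 x).card ≤ (B.erase x).card :=
    Finset.card_le_card Finset.inter_subset_left
  omega

lemma fal_bounds (hτ : IsCoSignotope n d τ) (hp : plusCount τ ≤ p) (hpn : p + d ≤ n)
    (hptn : p + d ≤ tn) {B : Finset ℕ} {x : ℕ} (hB : τ B = true) (hx : x ∈ B) :
    1 ≤ fal n tn τ B x ∧ fal n tn τ B x ≤ tn := by
  have hxI := Finset.mem_Icc.1 ((hτ.1 B hB).1 hx)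
  by_cases h : RAof n τ B x
  · rw [fal_ra h]
    have := ra_ge hτ hp hptn hB hx h
    omega
  · rw [fal_la h]
    have hla := la_of_not_ra hτ hp hpn hB hx h
    have := la_le hτ hp hB hx hla
    omega

lemma fal_lt (hτ : IsCoSignotope n d τ) (hp : plusCount τ ≤ p) (hpn : p + d ≤ n)
    (hptn : p + d ≤ tn) {B : Finset ℕ} {x y : ℕ} (hB : τ B = true)
    (hx : x ∈ B) (hy : y ∈ B) (hxy : x < y) :
    fal n tn τ B x < fal n tn τ B y := by
  by_cases hrx : RAof n τ B x
  · have hry : RAof n τ B y := pattern hτ hp hpn hB hx hy hxy hrx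
    rw [fal_ra hrx, fal_ra hry]
    have := ra_ge hτ hp hptn hB hx hrx
    omega
  · by_cases hry : RAof n τ B y
    · rw [fal_la hrx, fal_ra hry]
      have hlx : LAof n τ B x := la_of_not_ra hτ hp hpn hB hx hrx
      obtain ⟨h1, h2, h3, h4⟩ := erase_facts hτ hB hx
      obtain ⟨h1', h2', h3', h4'⟩ := erase_facts hτ hB hy
      have hneD : B.erase y ≠ B.erase x := by
        intro h
        have : x ∈ B.erase y := Finset.mem_erase.2 ⟨by omega, hx⟩
        rw [h] at this
        exact Finset.notMem_erase _ _ this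
      have hcp := count_pair hτ hp h1' h1 (by omega) hneD h3' h3
        (fun u hu hru => ra_flood hτ hB hy hry hu hru)
        (fun u hu hul => la_flood hτ hB hx hlx hu hul)
      -- disjointness bound
      have hdisj : (B.erase y ∩ Finset.Icc y n) ∩ (B.erase x ∩ Finset.Icc 1 x) = ∅ := by
        rw [Finset.eq_empty_iff_forall_notMem]
        intro w hw
        simp only [Finset.mem_inter, Finset.mem_erase, Finset.mem_Icc] at hw
        omega
      have hsub : (B.erase y ∩ Finset.Icc y n) ∪ (B.erase x ∩ Finset.Icc 1 x)
          ⊆ (B.erase x).erase y := by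
        intro w hw
        rcases Finset.mem_union.1 hw with h | h
        · simp only [Finset.mem_inter, Finset.mem_erase, Finset.mem_Icc] at h
          exact Finset.mem_erase.2 ⟨h.1.1, Finset.mem_erase.2 ⟨by omega, h.1.2⟩⟩
        · simp only [Finset.mem_inter, Finset.mem_erase, Finset.mem_Icc] at h
          exact Finset.mem_erase.2 ⟨by omega, Finset.mem_erase.2 ⟨h.1.1, h.1.2⟩⟩
      have hce : ((B.erase x).erase y).card + 1 = (B.erase x).card := by
        rw [Finset.card_erase_of_mem (Finset.mem_erase.2 ⟨by omega, hy⟩)]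
        have : 1 ≤ (B.erase x).card := Finset.card_pos.2 ⟨y, Finset.mem_erase.2 ⟨by omega, hy⟩⟩
        omega
      have hcup := Finset.card_union_add_card_inter (B.erase y ∩ Finset.Icc y n)
        (B.erase x ∩ Finset.Icc 1 x)
      rw [hdisj, Finset.card_empty] at hcup
      have hcle := Finset.card_le_card hsub
      have hge := ra_ge hτ hp hptn hB hy hry
      rcases hcp with h | ⟨h, _⟩ <;> omega
    · rw [fal_la hrx, fal_la hry]
      exact hxy

lemma fal_injOn (hτ : IsCoSignotope n d τ) (hp : plusCount τ ≤ p) (hpn : p + d ≤ n)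
    (hptn : p + d ≤ tn) {B : Finset ℕ} (hB : τ B = true) :
    Set.InjOn (fal n tn τ B) ↑B := by
  intro a ha b hb hab
  rcases lt_trichotomy a b with h | h | h
  · exact absurd hab (Nat.ne_of_lt (fal_lt hτ hp hpn hptn hB ha hb h))
  · exact h
  · exact absurd hab.symm (Nat.ne_of_lt (fal_lt hτ hp hpn hptn hB hb ha h))

lemma gamma_card (hτ : IsCoSignotope n d τ) (hp : plusCount τ ≤ p) (hpn : p + d ≤ n)
    (hptn : p + d ≤ tn) {B : Finset ℕ} (hB : τ B = true) :
    (gammaFun n tn τ B).card = B.card := by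
  rw [gammaFun_eq]
  exact Finset.card_image_of_injOn (fal_injOn hτ hp hpn hptn hB)

lemma gamma_subset (hτ : IsCoSignotope n d τ) (hp : plusCount τ ≤ p) (hpn : p + d ≤ n)
    (hptn : p + d ≤ tn) {B : Finset ℕ} (hB : τ B = true) :
    gammaFun n tn τ B ⊆ Finset.Icc 1 tn := by
  rw [gammaFun_eq]
  intro e he
  obtain ⟨x, hx, rfl⟩ := Finset.mem_image.1 he
  have := fal_bounds hτ hp hpn hptn hB hx
  exact Finset.mem_Icc.2 this

lemma fal_mem_gamma {B : Finset ℕ} {x : ℕ} (hx : x ∈ B) :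
    fal n tn τ B x ∈ gammaFun n tn τ B := by
  rw [gammaFun_eq]
  exact Finset.mem_image_of_mem _ hx

lemma gamma_surj {B : Finset ℕ} {e : ℕ} (he : e ∈ gammaFun n tn τ B) :
    ∃ x ∈ B, fal n tn τ B x = e := by
  rw [gammaFun_eq] at he
  exact Finset.mem_image.1 he

lemma gamma_rank (hτ : IsCoSignotope n d τ) (hp : plusCount τ ≤ p) (hpn : p + d ≤ n)
    (hptn : p + d ≤ tn) {B : Finset ℕ} {x : ℕ} (hB : τ B = true) (hx : x ∈ B) :
    ((gammaFun n tn τ B).filter (· < fal n tn τ B x)).card = (B.filter (· < x)).card := by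
  have himg : (gammaFun n tn τ B).filter (· < fal n tn τ B x)
      = (B.filter (· < x)).image (fal n tn τ B) := by
    ext w
    constructor
    · intro hmem
      obtain ⟨hw, hlt⟩ := Finset.mem_filter.1 hmem
      obtain ⟨b, hb, rfl⟩ := gamma_surj hw
      refine Finset.mem_image.2 ⟨b, Finset.mem_filter.2 ⟨hb, ?_⟩, rfl⟩
      by_contra hbx
      push_neg at hbx
      rcases Nat.lt_or_ge x b with h | h
      · exact absurd (fal_lt hτ hp hpn hptn hB hx hb h) (by omega)
      · have hxb : x = b := by omega
        subst hxb; omega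
    · intro hmem
      obtain ⟨b, hb, rfl⟩ := Finset.mem_image.1 hmem
      obtain ⟨hbB, hbx⟩ := Finset.mem_filter.1 hb
      exact Finset.mem_filter.2 ⟨fal_mem_gamma hbB, fal_lt hτ hp hpn hptn hB hbB hx hbx⟩
  rw [himg]
  apply Finset.card_image_of_injOn
  exact (fal_injOn hτ hp hpn hptn hB).mono (by
    intro w hw
    exact Finset.mem_coe.2 (Finset.mem_of_mem_filter _ (Finset.mem_coe.1 hw)))

lemma rank_partition {B : Finset ℕ} {x : ℕ} (hx : x ∈ B) :
    (B.filter (· < x)).card + (B.filter (fun w => x < w)).card + 1 = B.card := by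
  have hun : B.filter (· < x) ∪ B.filter (fun w => x < w) = B.erase x := by
    ext w
    simp only [Finset.mem_union, Finset.mem_filter, Finset.mem_erase]
    constructor
    · rintro (⟨h1, h2⟩ | ⟨h1, h2⟩) <;> exact ⟨by omega, h1⟩
    · rintro ⟨h1, h2⟩
      rcases Nat.lt_or_ge w x with h | h
      · exact Or.inl ⟨h2, h⟩
      · exact Or.inr ⟨h2, by omega⟩
  have hdisj : (B.filter (· < x)) ∩ (B.filter (fun w => x < w)) = ∅ := by
    rw [Finset.eq_empty_iff_forall_notMem]
    intro w hw
    simp only [Finset.mem_inter, Finset.mem_filter] at hw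
    omega
  have := Finset.card_union_add_card_inter (B.filter (· < x)) (B.filter (fun w => x < w))
  rw [hun, hdisj, Finset.card_empty, Finset.card_erase_of_mem hx] at this
  have : 1 ≤ B.card := Finset.card_pos.2 ⟨x, hx⟩
  omega

end GKit
end S13
namespace S13

section GInj

variable {n tn d p : ℕ} {τ : Finset ℕ → Bool}

lemma inj_mismatch (hτ : IsCoSignotope n d τ) (hp : plusCount τ ≤ p) (hpn : p + d ≤ n)
    (hptn : p + d ≤ tn) {B B' : Finset ℕ} {x x' : ℕ}
    (hB : τ B = true) (hB' : τ B' = true) (hx : x ∈ B) (hx' : x' ∈ B')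
    (hra : RAof n τ B x) (hra' : ¬ RAof n τ B' x')
    (heq : x + tn - n = x')
    (hrank : (B.filter (· < x)).card = (B'.filter (· < x')).card) : False := by
  have hla' := la_of_not_ra hτ hp hpn hB' hx' hra'
  obtain ⟨h1, h2, h3, h4⟩ := erase_facts hτ hB hx
  obtain ⟨h1', h2', h3', h4'⟩ := erase_facts hτ hB' hx'
  by_cases hDD : B.erase x = B'.erase x'
  · rw [RAof] at hra
    have : LeftAligned (series n τ (B.erase x)) := by rw [hDD]; exact hla'
    exact not_ra_la hra this
  · have hcp := count_pair hτ hp h1 h1' (by omega) hDD h3 h3'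
      (fun u hu hru => ra_flood hτ hB hx hra hu hru)
      (fun u hu hul => la_flood hτ hB' hx' hla' hu hul)
    have hα : B.erase x ∩ Finset.Icc x n = B.filter (fun w => x < w) := by
      ext w
      simp only [Finset.mem_inter, Finset.mem_erase, Finset.mem_Icc, Finset.mem_filter]
      constructor
      · rintro ⟨⟨hne, hwB⟩, hxw, _⟩
        exact ⟨hwB, by omega⟩
      · rintro ⟨hwB, hxw⟩
        have := Finset.mem_Icc.1 ((hτ.1 B hB).1 hwB)
        exact ⟨⟨by omega, hwB⟩, by omega, this.2⟩
    have hβ : B'.erase x' ∩ Finset.Icc 1 x' = B'.filter (· < x') := by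
      ext w
      simp only [Finset.mem_inter, Finset.mem_erase, Finset.mem_Icc, Finset.mem_filter]
      constructor
      · rintro ⟨⟨hne, hwB⟩, _, hwx⟩
        exact ⟨hwB, by omega⟩
      · rintro ⟨hwB, hwx⟩
        have := Finset.mem_Icc.1 ((hτ.1 B' hB').1 hwB)
        exact ⟨⟨by omega, hwB⟩, this.1, by omega⟩
    have hpart := rank_partition hx
    have hBc : B.card = d := (hτ.1 B hB).2
    have hge := ra_ge hτ hp hptn hB hx hra
    rw [hα, hβ] at hcp
    rcases hcp with h | ⟨h, _⟩ <;> omega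

lemma gamma_sub (hτ : IsCoSignotope n d τ) (hp : plusCount τ ≤ p) (hpn : p + d ≤ n)
    (hptn : p + d ≤ tn) {B B' : Finset ℕ} (hB : τ B = true) (hB' : τ B' = true)
    (heq : gammaFun n tn τ B = gammaFun n tn τ B') : B ⊆ B' := by
  intro x hx
  have hmem : fal n tn τ B x ∈ gammaFun n tn τ B' := heq ▸ fal_mem_gamma hx
  obtain ⟨x', hx', hfe⟩ := gamma_surj hmem
  have hrank : (B.filter (· < x)).card = (B'.filter (· < x')).card := by
    have r1 := gamma_rank hτ hp hpn hptn hB hx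
    have r2 := gamma_rank hτ hp hpn hptn hB' hx'
    rw [← r1, ← r2, heq, hfe]
  by_cases hrx : RAof n τ B x <;> by_cases hrx' : RAof n τ B' x'
  · rw [fal_ra hrx'] at hfe
    rw [fal_ra hrx] at hfe
    have hg := ra_ge hτ hp hptn hB hx hrx
    have hg' := ra_ge hτ hp hptn hB' hx' hrx'
    have : x' = x := by omega
    subst this; exact hx'
  · exfalso
    rw [fal_la hrx'] at hfe
    rw [fal_ra hrx] at hfe
    exact inj_mismatch hτ hp hpn hptn hB hB' hx hx' hrx hrx' hfe.symm hrank
  · exfalso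
    rw [fal_ra hrx'] at hfe
    rw [fal_la hrx] at hfe
    exact inj_mismatch hτ hp hpn hptn hB' hB hx' hx hrx' hrx hfe hrank.symm
  · rw [fal_la hrx'] at hfe
    rw [fal_la hrx] at hfe
    subst hfe; exact hx'

lemma gamma_inj (hτ : IsCoSignotope n d τ) (hp : plusCount τ ≤ p) (hpn : p + d ≤ n)
    (hptn : p + d ≤ tn) {B B' : Finset ℕ} (hB : τ B = true) (hB' : τ B' = true)
    (heq : gammaFun n tn τ B = gammaFun n tn τ B') : B = B' :=
  Finset.Subset.antisymm (gamma_sub hτ hp hpn hptn hB hB' heq)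
    (gamma_sub hτ hp hpn hptn hB' hB heq.symm)

lemma ofPlusSet_eq_true {S : Set (Finset ℕ)} {A : Finset ℕ} :
    ofPlusSet S A = true ↔ A ∈ S := by
  rw [ofPlusSet]
  split <;> simp_all

lemma phi_plus_iff {A : Finset ℕ} :
    phiFun n tn τ A = true ↔ ∃ B, τ B = true ∧ A = gammaFun n tn τ B := by
  rw [phiFun, ofPlusSet_eq_true]
  rfl

lemma phi_plusCount (hτ : IsCoSignotope n d τ) (hp : plusCount τ ≤ p) (hpn : p + d ≤ n)
    (hptn : p + d ≤ tn) : plusCount (phiFun n tn τ) = plusCount τ := by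
  have hset : {A | phiFun n tn τ A = true}
      = (fun B => gammaFun n tn τ B) '' {B | τ B = true} := by
    ext A
    rw [Set.mem_setOf_eq, phi_plus_iff]
    constructor
    · rintro ⟨B, hB, rfl⟩
      exact ⟨B, hB, rfl⟩
    · rintro ⟨B, hB, rfl⟩
      exact ⟨B, hB, rfl⟩
  rw [plusCount, hset, Set.ncard_image_of_injOn, ← plusCount]
  intro B hB B' hB' h
  exact gamma_inj hτ hp hpn hptn hB hB' h

end GInj
end S13
namespace S13

section MM

variable {n tn d p : ℕ} {τ : Finset ℕ → Bool}

/-- Mismatch counting: a left-aligned realization in `BL` and a right-aligned realization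
in `BR` of the same element `e` of the common base `Ct` force the tight corner case. -/
lemma mm_count (hτ : IsCoSignotope n d τ) (hp : plusCount τ ≤ p) (hpn : p + d ≤ n)
    (hptn : p + d ≤ tn) {Ct : Finset ℕ} {BL BR : Finset ℕ} {wL wR e c zL zR : ℕ}
    (hBL : τ BL = true) (hBR : τ BR = true)
    (hwL : wL ∈ BL) (hwR : wR ∈ BR)
    (himL : (BL.erase wL).image (fal n tn τ BL) = Ct)
    (himR : (BR.erase wR).image (fal n tn τ BR) = Ct)
    (hfL : fal n tn τ BL wL = zL) (hfR : fal n tn τ BR wR = zR)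
    (hzL : zL ∉ Ct) (hzR : zR ∉ Ct)
    (hCtc : Ct.card + 1 = d)
    (he : e ∈ BL.erase wL) (hc : c ∈ BR.erase wR)
    (hela : ¬ RAof n τ BL e) (hcra : RAof n τ BR c)
    (hfe : fal n tn τ BR c = e) :
    tn ≤ n ∧ zL < e ∧ e < zR ∧
      ∃ u, u ∈ BL.erase e ∧ u ∉ BR.erase c ∧ c ≤ u := by
  have heB : e ∈ BL := Finset.mem_of_mem_erase he
  have hcB : c ∈ BR := Finset.mem_of_mem_erase hc
  have hlaE : LAof n τ BL e := la_of_not_ra hτ hp hpn hBL heB hela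
  have heCt : e ∈ Ct := by
    rw [← himL]
    refine Finset.mem_image.2 ⟨e, he, ?_⟩
    exact fal_la hela
  have hge := ra_ge hτ hp hptn hBR hcB hcra
  have hhon : e + n = c + tn := by
    rw [fal_ra hcra] at hfe
    omega
  obtain ⟨hL1, hL2, hL3, hL4⟩ := erase_facts hτ hBL heB
  obtain ⟨hR1, hR2, hR3, hR4⟩ := erase_facts hτ hBR hcB
  -- the two bases differ
  have hneD : BR.erase c ≠ BL.erase e := by
    intro h
    have hra' : RightAligned (series n τ (BL.erase e)) := by
      rw [← h]; exact hcra
    exact not_ra_la hra' hlaE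
  have hcp := count_pair hτ hp hR1 hL1 (by omega) hneD hR3 hL3
    (fun u hu hru => ra_flood hτ hBR hcB hcra hu hru)
    (fun u hu hul => la_flood hτ hBL heB hlaE hu hul)
  -- partition of Ct at e
  have hpartCt := rank_partition heCt
  -- bound (BL.erase e ∩ Icc 1 e).card
  have hsubL : ∀ b ∈ BL.erase e ∩ Finset.Icc 1 e, b < e ∧ b = fal n tn τ BL b ∧
      (b = wL ∨ b ∈ Ct) := by
    intro b hb
    rw [Finset.mem_inter, Finset.mem_erase, Finset.mem_Icc] at hb
    obtain ⟨⟨hbe, hbB⟩, _, hble⟩ := hb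
    have hblt : b < e := by omega
    have hbra : ¬ RAof n τ BL b := by
      intro h
      exact hela (pattern hτ hp hpn hBL hbB heB hblt h)
    refine ⟨hblt, (fal_la hbra).symm, ?_⟩
    by_cases hbw : b = wL
    · exact Or.inl hbw
    · right
      rw [← himL]
      exact Finset.mem_image.2 ⟨b, Finset.mem_erase.2 ⟨hbw, hbB⟩, fal_la hbra⟩
  have hcardL : ∀ hok : ¬ zL < e, (BL.erase e ∩ Finset.Icc 1 e).card
      ≤ (Ct.filter (· < e)).card := by
    intro hok
    apply Finset.card_le_card
    intro b hb
    obtain ⟨hblt, hbf, hbor⟩ := hsubL b hb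
    rcases hbor with rfl | hbCt
    · exfalso
      rw [← hbf] at hfL
      omega
    · exact Finset.mem_filter.2 ⟨hbCt, hblt⟩
  have hcardL' : (BL.erase e ∩ Finset.Icc 1 e).card ≤ (Ct.filter (· < e)).card + 1 := by
    have hsub : BL.erase e ∩ Finset.Icc 1 e ⊆ insert zL (Ct.filter (· < e)) := by
      intro b hb
      obtain ⟨hblt, hbf, hbor⟩ := hsubL b hb
      rcases hbor with rfl | hbCt
      · rw [← hbf] at hfL
        rw [Finset.mem_insert]
        exact Or.inl hfL
      · exact Finset.mem_insert_of_mem (Finset.mem_filter.2 ⟨hbCt, hblt⟩)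
    calc (BL.erase e ∩ Finset.Icc 1 e).card ≤ _ := Finset.card_le_card hsub
      _ ≤ _ := Finset.card_insert_le _ _
  -- bound (BR.erase c ∩ Icc c n).card via fal BR
  have hsubR : ∀ b ∈ BR.erase c ∩ Finset.Icc c n, e < fal n tn τ BR b ∧
      (b = wR ∨ fal n tn τ BR b ∈ Ct) := by
    intro b hb
    rw [Finset.mem_inter, Finset.mem_erase, Finset.mem_Icc] at hb
    obtain ⟨⟨hbe, hbB⟩, hcb, _⟩ := hb
    have hblt : c < b := by omega
    have hbra : RAof n τ BR b := pattern hτ hp hpn hBR hcB hbB hblt hcra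
    have hgeb := ra_ge hτ hp hptn hBR hbB hbra
    refine ⟨by rw [fal_ra hbra]; omega, ?_⟩
    by_cases hbw : b = wR
    · exact Or.inl hbw
    · right
      rw [← himR]
      exact Finset.mem_image.2 ⟨b, Finset.mem_erase.2 ⟨hbw, hbB⟩, rfl⟩
  have hinjR : Set.InjOn (fal n tn τ BR) ↑(BR.erase c ∩ Finset.Icc c n) := by
    apply (fal_injOn hτ hp hpn hptn hBR).mono
    intro w hw
    rw [Finset.mem_coe, Finset.mem_inter, Finset.mem_erase] at hw
    exact Finset.mem_coe.2 hw.1.2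
  have hcardR : ∀ hok : ¬ e < zR, (BR.erase c ∩ Finset.Icc c n).card
      ≤ (Ct.filter (fun w => e < w)).card := by
    intro hok
    apply Finset.card_le_card_of_injOn _ _ hinjR
    intro b hb
    obtain ⟨hblt, hbor⟩ := hsubR b hb
    rcases hbor with rfl | hbCt
    · exfalso
      rw [hfR] at hblt
      omega
    · exact Finset.mem_filter.2 ⟨hbCt, hblt⟩
  have hcardR' : (BR.erase c ∩ Finset.Icc c n).card
      ≤ (Ct.filter (fun w => e < w)).card + 1 := by
    have := Finset.card_le_card_of_injOn (fal n tn τ BR)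
      (t := insert zR (Ct.filter (fun w => e < w))) (fun b hb => by
        obtain ⟨hblt, hbor⟩ := hsubR b hb
        rcases hbor with rfl | hbCt
        · rw [Finset.mem_coe, Finset.mem_insert]
          exact Or.inl hfR
        · exact Finset.mem_insert_of_mem (Finset.mem_filter.2 ⟨hbCt, hblt⟩)) hinjR
    calc (BR.erase c ∩ Finset.Icc c n).card ≤ _ := this
      _ ≤ _ := Finset.card_insert_le _ _
  rcases hcp with h | ⟨h, u, v, huD3, huD1, hcu, hvD1, hvD3, hvl⟩
  · exfalso
    omega
  · -- corner case
    by_cases czL : zL < e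
    · by_cases czR : e < zR
      · refine ⟨by omega, czL, czR, u, huD3, huD1, hcu⟩
      · exact absurd (hcardR czR) (by omega)
    · exact absurd (hcardL czL) (by omega)

end MM
end S13
namespace S13

section Mix

variable {n tn d p : ℕ} {τ : Finset ℕ → Bool}

lemma mix_false (hτ : IsCoSignotope n d τ) (hp : plusCount τ ≤ p) (hpn : p + d ≤ n)
    (hptn : p + d ≤ tn) {Ct : Finset ℕ} {z1 z3 : ℕ} {B1 B3 : Finset ℕ} {w1 w3 : ℕ}
    (hB1 : τ B1 = true) (hB3 : τ B3 = true) (hw1 : w1 ∈ B1) (hw3 : w3 ∈ B3)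
    (hf1 : fal n tn τ B1 w1 = z1) (hf3 : fal n tn τ B3 w3 = z3)
    (him1 : (B1.erase w1).image (fal n tn τ B1) = Ct)
    (him3 : (B3.erase w3).image (fal n tn τ B3) = Ct)
    (hz1 : z1 ∉ Ct) (hz3 : z3 ∉ Ct) (h13 : z1 < z3)
    (hCtc : Ct.card + 1 = d)
    (hne : B1.erase w1 ≠ B3.erase w3) : False := by
  classical
  have hmis : ∃ b1 ∈ B1.erase w1, ∃ b3 ∈ B3.erase w3,
      fal n tn τ B1 b1 = fal n tn τ B3 b3 ∧ b1 ≠ b3 := by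
    by_contra hno
    push_neg at hno
    apply hne
    apply Finset.Subset.antisymm
    · intro b1 hb1
      have hmem : fal n tn τ B1 b1 ∈ Ct := him1 ▸ Finset.mem_image_of_mem _ hb1
      rw [← him3] at hmem
      obtain ⟨b3, hb3, hf⟩ := Finset.mem_image.1 hmem
      have := hno b1 hb1 b3 hb3 hf.symm
      rw [this]; exact hb3
    · intro b3 hb3
      have hmem : fal n tn τ B3 b3 ∈ Ct := him3 ▸ Finset.mem_image_of_mem _ hb3
      rw [← him1] at hmem
      obtain ⟨b1, hb1, hf⟩ := Finset.mem_image.1 hmem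
      have := hno b1 hb1 b3 hb3 hf
      rw [← this]; exact hb1
  obtain ⟨b1, hb1, b3, hb3, hff, hbne⟩ := hmis
  have hb1B : b1 ∈ B1 := Finset.mem_of_mem_erase hb1
  have hb3B : b3 ∈ B3 := Finset.mem_of_mem_erase hb3
  by_cases hr1 : RAof n τ B1 b1 <;> by_cases hr3 : RAof n τ B3 b3
  · have hg1 := ra_ge hτ hp hptn hB1 hb1B hr1
    have hg3 := ra_ge hτ hp hptn hB3 hb3B hr3
    rw [fal_ra hr1, fal_ra hr3] at hff
    exact hbne (by omega)
  · -- type (ii): RA in B1, LA in B3 — contradiction with z1 < z3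
    rw [fal_ra hr1, fal_la hr3] at hff
    obtain ⟨_, hlt1, hlt2, _⟩ := mm_count hτ hp hpn hptn hB3 hB1 hw3 hw1 him3 him1
      hf3 hf1 hz3 hz1 hCtc hb3 hb1 hr3 hr1 (by rw [fal_ra hr1]; exact hff)
    omega
  · -- type (i): LA in B1, RA in B3 — maximality machinery
    set M := Ct.filter (fun e => e ∈ B1.erase w1 ∧ ¬ RAof n τ B1 e ∧
        ∃ c ∈ B3.erase w3, RAof n τ B3 c ∧ fal n tn τ B3 c = e) with hM
    have hb1Ct : b1 ∈ Ct := by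
      rw [← him1]
      exact Finset.mem_image.2 ⟨b1, hb1, fal_la hr1⟩
    have hMne : M.Nonempty := by
      refine ⟨b1, Finset.mem_filter.2 ⟨hb1Ct, hb1, hr1, b3, hb3, hr3, ?_⟩⟩
      rw [← hff, fal_la hr1]
    set e0 := M.max' hMne with he0
    have he0M : e0 ∈ M := Finset.max'_mem _ _
    obtain ⟨he0Ct, he0B1, he0ra, c0, hc0, hc0ra, hc0f⟩ := Finset.mem_filter.1 he0M
    have hc0B : c0 ∈ B3 := Finset.mem_of_mem_erase hc0
    obtain ⟨htnn, hz1e, he0z3, u, huB1e, hunB3c, hcu⟩ := mm_count hτ hp hpn hptn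
      hB1 hB3 hw1 hw3 him1 him3 hf1 hf3 hz1 hz3 hCtc he0B1 hc0 he0ra hc0ra hc0f
    have hgc0 := ra_ge hτ hp hptn hB3 hc0B hc0ra
    have hhon : e0 + n = c0 + tn := by
      rw [fal_ra hc0ra] at hc0f
      omega
    have huB1 : u ∈ B1 := Finset.mem_of_mem_erase huB1e
    have hue0 : e0 < u := by
      have : u ≠ e0 := (Finset.mem_erase.1 huB1e).1
      omega
    have he0B1' : e0 ∈ B1 := Finset.mem_of_mem_erase he0B1
    by_cases hru : RAof n τ B1 u
    · -- case A
      have hgu := ra_ge hτ hp hptn hB1 huB1 hru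
      have hfu : fal n tn τ B1 u = u + tn - n := fal_ra hru
      have he2gt : e0 < u + tn - n := by
        have hne2 : fal n tn τ B1 u ≠ fal n tn τ B1 e0 := by
          intro h
          exact (Finset.mem_erase.1 huB1e).1
            (fal_injOn hτ hp hpn hptn hB1 (Finset.mem_coe.2 huB1)
              (Finset.mem_coe.2 he0B1') h)
        rw [hfu, fal_la he0ra] at hne2
        omega
      have huw1 : u ≠ w1 := by
        intro h
        rw [h, hf1] at hfu
        omega
      have he2Ct : u + tn - n ∈ Ct := by
        rw [← him1]
        exact Finset.mem_image.2 ⟨u, Finset.mem_erase.2 ⟨huw1, huB1⟩, hfu⟩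
      have he2b3 : ∃ b ∈ B3.erase w3, fal n tn τ B3 b = u + tn - n := by
        rw [← him3] at he2Ct
        exact Finset.mem_image.1 he2Ct
      obtain ⟨b3', hb3', hfb3'⟩ := he2b3
      have hb3'B : b3' ∈ B3 := Finset.mem_of_mem_erase hb3'
      by_cases hrb3' : RAof n τ B3 b3'
      · -- b3' = u forced, then u = c0, contradiction
        have hgb3' := ra_ge hτ hp hptn hB3 hb3'B hrb3'
        rw [fal_ra hrb3'] at hfb3'
        have hb3u : b3' = u := by omega
        subst hb3u
        have : b3' = c0 := by
          by_contra hne'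
          exact hunB3c (Finset.mem_erase.2 ⟨hne', hb3'B⟩)
        subst this
        rw [fal_ra hc0ra] at hc0f
        omega
      · -- type (ii) mismatch at e2 : LA in B3, RA in B1 — contradiction via z-order
        obtain ⟨_, hlt1, hlt2, _⟩ := mm_count hτ hp hpn hptn hB3 hB1 hw3 hw1 him3 him1
          hf3 hf1 hz3 hz1 hCtc hb3' (Finset.mem_erase.2 ⟨huw1, huB1⟩) hrb3' hru
          (by rw [hfu, ← hfb3', fal_la hrb3'])
        -- z3 < fal b3' and fal b3' < z1 : contradiction with z1 < z3
        omega
    · -- case B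
      have hfu : fal n tn τ B1 u = u := fal_la hru
      have huw1 : u ≠ w1 := by
        intro h
        rw [h, hf1] at hfu
        omega
      have he2Ct : u ∈ Ct := by
        rw [← him1]
        exact Finset.mem_image.2 ⟨u, Finset.mem_erase.2 ⟨huw1, huB1⟩, hfu⟩
      have he2b3 : ∃ b ∈ B3.erase w3, fal n tn τ B3 b = u := by
        rw [← him3] at he2Ct
        exact Finset.mem_image.1 he2Ct
      obtain ⟨b3', hb3', hfb3'⟩ := he2b3
      have hb3'B : b3' ∈ B3 := Finset.mem_of_mem_erase hb3'
      by_cases hrb3' : RAof n τ B3 b3'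
      · -- u ∈ M, contradicting maximality
        have huM : u ∈ M := Finset.mem_filter.2
          ⟨he2Ct, Finset.mem_erase.2 ⟨huw1, huB1⟩, hru, b3', hb3', hrb3', hfb3'⟩
        have := Finset.le_max' M u huM
        omega
      · -- b3' = u = c0 : contradiction RA vs not RA
        rw [fal_la hrb3'] at hfb3'
        subst hfb3'
        have : b3' = c0 := by
          by_contra hne'
          exact hunB3c (Finset.mem_erase.2 ⟨hne', hb3'B⟩)
        subst this
        exact hrb3' hc0ra
  · rw [fal_la hr1, fal_la hr3] at hff
    exact hbne hff

end Mix
end S13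
namespace S13

section Transfer

variable {n tn d p : ℕ} {τ : Finset ℕ → Bool}

lemma gamma_erase_eq (hτ : IsCoSignotope n d τ) (hp : plusCount τ ≤ p) (hpn : p + d ≤ n)
    (hptn : p + d ≤ tn) {B : Finset ℕ} {w : ℕ} (hB : τ B = true) (hw : w ∈ B) :
    (gammaFun n tn τ B).erase (fal n tn τ B w) = (B.erase w).image (fal n tn τ B) := by
  ext e
  constructor
  · intro hmem
    obtain ⟨hne, he⟩ := Finset.mem_erase.1 hmem
    obtain ⟨b, hb, rfl⟩ := gamma_surj he
    refine Finset.mem_image.2 ⟨b, Finset.mem_erase.2 ⟨?_, hb⟩, rfl⟩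
    intro h; subst h; exact hne rfl
  · intro hmem
    obtain ⟨b, hb, rfl⟩ := Finset.mem_image.1 hmem
    obtain ⟨hbw, hbB⟩ := Finset.mem_erase.1 hb
    refine Finset.mem_erase.2 ⟨?_, fal_mem_gamma hbB⟩
    intro h
    exact hbw (fal_injOn hτ hp hpn hptn hB (Finset.mem_coe.2 hbB) (Finset.mem_coe.2 hw) h)

open Classical in
lemma gamma_transfer (hτ : IsCoSignotope n d τ) (hp : plusCount τ ≤ p) (hpn : p + d ≤ n)
    (hptn : p + d ≤ tn) {B : Finset ℕ} {w y : ℕ} (hB : τ B = true) (hw : w ∈ B)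
    (hy : y ∈ dom n (B.erase w)) (hB0 : τ (insert y (B.erase w)) = true) :
    gammaFun n tn τ (insert y (B.erase w))
      = insert (if RightAligned (series n τ (B.erase w)) then y + tn - n else y)
          ((B.erase w).image (fal n tn τ B)) := by
  classical
  have hyC : y ∉ B.erase w := (mem_dom.1 hy).2.2
  have herase : (insert y (B.erase w)).erase y = B.erase w := Finset.erase_insert hyC
  rw [gammaFun_eq, Finset.image_insert]
  have hslot : fal n tn τ (insert y (B.erase w)) y
      = if RightAligned (series n τ (B.erase w)) then y + tn - n else y := by
    rw [fal, RAof, herase]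
  rw [hslot]
  congr 1
  apply Finset.image_congr
  intro c hc
  have hcB : c ∈ B.erase w := Finset.mem_coe.1 hc
  obtain ⟨h1, h2, h3, h4⟩ := erase_facts hτ hB hw
  have hiff : RAof n τ (insert y (B.erase w)) c ↔ RAof n τ B c := by
    have := twoD hτ hp hpn h1 h2 (c := c) hcB hy h3 hB0 (by rw [h4]; exact hB)
    rwa [h4] at this
  by_cases h : RAof n τ B c
  · rw [fal, if_pos (hiff.2 h), fal, if_pos h]
  · rw [fal, if_neg (fun hh => h (hiff.1 hh)), fal, if_neg h]

open Classical in
lemma phi_plus_ext (hτ : IsCoSignotope n d τ) (hp : plusCount τ ≤ p) (hpn : p + d ≤ n)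
    (hptn : p + d ≤ tn) {B : Finset ℕ} {w y : ℕ} {Ct : Finset ℕ} (hB : τ B = true)
    (hw : w ∈ B) (him : (B.erase w).image (fal n tn τ B) = Ct)
    (hy : y ∈ dom n (B.erase w)) (hB0 : τ (insert y (B.erase w)) = true) :
    phiFun n tn τ
      (insert (if RightAligned (series n τ (B.erase w)) then y + tn - n else y) Ct)
      = true := by
  rw [phi_plus_iff]
  exact ⟨insert y (B.erase w), hB0,
    by rw [gamma_transfer hτ hp hpn hptn hB hw hy hB0, him]⟩

end Transfer
end S13
namespace S13

section PhiCosig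

variable {n tn d p : ℕ} {τ : Finset ℕ → Bool}

lemma phi_cosig (hτ : IsCoSignotope n d τ) (hp : plusCount τ ≤ p) (hpn : p + d ≤ n)
    (hptn : p + d ≤ tn) : IsCoSignotope tn d (phiFun n tn τ) := by
  classical
  constructor
  · intro A hA
    obtain ⟨B, hB, rfl⟩ := phi_plus_iff.1 hA
    refine ⟨gamma_subset hτ hp hpn hptn hB, ?_⟩
    rw [gamma_card hτ hp hpn hptn hB]
    exact (hτ.1 B hB).2
  · intro Bt hBtI hBtc bt hbt
    by_contra hcon
    push_neg at hcon
    set Ct := Bt.erase bt with hCt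
    have hCtI : Ct ⊆ Finset.Icc 1 tn := (Finset.erase_subset _ _).trans hBtI
    have hCtc : Ct.card + 1 = d := by
      rw [hCt, Finset.card_erase_of_mem hbt]
      have : 1 ≤ Bt.card := Finset.card_pos.2 ⟨bt, hbt⟩
      omega
    obtain ⟨i, j, k, a, hij, hjk, hi, hj, hk⟩ := sc_two (series tn (phiFun n tn τ) Ct) (by omega)
    have trans : ∀ (i : ℕ) (a : Bool), (series tn (phiFun n tn τ) Ct)[i]? = some a →
        ∃ z, ((dom tn Ct).sort (· ≤ ·))[i]? = some z ∧ phiFun n tn τ (insert z Ct) = a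
          ∧ z ∈ dom tn Ct := by
      intro i a h
      rw [series_getElem?] at h
      cases hs : ((dom tn Ct).sort (· ≤ ·))[i]? with
      | none => rw [hs] at h; simp at h
      | some z =>
        rw [hs] at h
        simp only [Option.map_some] at h
        exact ⟨z, rfl, Option.some_inj.mp h, sort_mem_of_getElem? hs⟩
    obtain ⟨z1, hs1, hv1, hd1⟩ := trans i a hi
    obtain ⟨z2, hs2, hv2, hd2⟩ := trans j (!a) hj
    obtain ⟨z3, hs3, hv3, hd3⟩ := trans k a hk
    have h12 : z1 < z2 := sort_lt_of_getElem? hij hs1 hs2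
    have h23 : z2 < z3 := sort_lt_of_getElem? hjk hs2 hs3
    have hz1Ct : z1 ∉ Ct := (mem_dom.1 hd1).2.2
    have hz2Ct : z2 ∉ Ct := (mem_dom.1 hd2).2.2
    have hz3Ct : z3 ∉ Ct := (mem_dom.1 hd3).2.2
    have slot : ∀ z ∈ dom tn Ct, phiFun n tn τ (insert z Ct) = true →
        ∃ B w, τ B = true ∧ w ∈ B ∧ fal n tn τ B w = z ∧
          (B.erase w).image (fal n tn τ B) = Ct := by
      intro z hz hTz
      obtain ⟨B, hB, hAB⟩ := phi_plus_iff.1 hTz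
      have hzI : z ∈ gammaFun n tn τ B := by
        rw [← hAB]; exact Finset.mem_insert_self _ _
      obtain ⟨w, hw, hfw⟩ := gamma_surj hzI
      refine ⟨B, w, hB, hw, hfw, ?_⟩
      have hge := gamma_erase_eq hτ hp hpn hptn hB hw
      rw [hfw, ← hAB, Finset.erase_insert (mem_dom.1 hz).2.2] at hge
      exact hge.symm
    cases a with
    | false =>
      -- pattern (-,+,-) : plus at z2
      obtain ⟨B, w, hB, hw, hfw, him⟩ := slot z2 hd2 (by simpa using hv2)
      have hwI := Finset.mem_Icc.1 ((hτ.1 B hB).1 hw)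
      by_cases hra : RAof n τ B w
      · -- show plus at z3, contradicting hv3
        have hge := ra_ge hτ hp hptn hB hw hra
        have hz2w : z2 = w + tn - n := by rw [← hfw, fal_ra hra]
        have hz3n : z3 + n = (z3 + n - tn) + tn := by
          have : z3 ≤ tn := (mem_dom.1 hd3).2.1
          omega
        set u := z3 + n - tn with hu
        have huw : w < u := by omega
        have hun : u ≤ n := by
          have : z3 ≤ tn := (mem_dom.1 hd3).2.1
          omega
        have huC : u ∉ B.erase w := by
          intro huC
          have huB : u ∈ B := Finset.mem_of_mem_erase huC
          by_cases hru : RAof n τ B u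
          · have hmem : fal n tn τ B u ∈ Ct := by
              rw [← him]; exact Finset.mem_image_of_mem _ huC
            rw [fal_ra hru] at hmem
            have hval : u + tn - n = z3 := by omega
            rw [hval] at hmem
            exact hz3Ct hmem
          · exact hru (pattern hτ hp hpn hB hw huB huw hra)
        have hudom : u ∈ dom n (B.erase w) := mem_dom.2 ⟨by omega, hun, huC⟩
        have hplus := ra_flood hτ hB hw hra hudom (by omega)
        have := phi_plus_ext hτ hp hpn hptn hB hw him hudom hplus
        rw [if_pos (show RightAligned (series n τ (B.erase w)) from hra)] at this
        have hval : u + tn - n = z3 := by omega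
        rw [hval] at this
        rw [hv3] at this
        simp at this
      · -- show plus at z1, contradicting hv1
        have hla : LAof n τ B w := la_of_not_ra hτ hp hpn hB hw hra
        have hz2w : z2 = w := by rw [← hfw, fal_la hra]
        have hz1C : z1 ∉ B.erase w := by
          intro hz1C
          have hz1B : z1 ∈ B := Finset.mem_of_mem_erase hz1C
          by_cases hr1 : RAof n τ B z1
          · exact hra (pattern hτ hp hpn hB hz1B hw (by omega) hr1)
          · have : fal n tn τ B z1 ∈ Ct := by
              rw [← him]; exact Finset.mem_image_of_mem _ hz1C
            rw [fal_la hr1] at this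
            exact hz1Ct this
        have hz1dom : z1 ∈ dom n (B.erase w) :=
          mem_dom.2 ⟨(mem_dom.1 hd1).1, by omega, hz1C⟩
        have hplus := la_flood hτ hB hw hla hz1dom (by omega)
        have := phi_plus_ext hτ hp hpn hptn hB hw him hz1dom hplus
        rw [if_neg (show ¬ RightAligned (series n τ (B.erase w)) from hra)] at this
        rw [hv1] at this
        simp at this
    | true =>
      -- pattern (+,-,+) : pluses at z1, z3, minus at z2
      obtain ⟨B1, w1, hB1, hw1, hf1, him1⟩ := slot z1 hd1 hv1
      obtain ⟨B3, w3, hB3, hw3, hf3, him3⟩ := slot z3 hd3 hv3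
      by_cases hCC : B1.erase w1 = B3.erase w3
      · -- same base
        have hw1I := Finset.mem_Icc.1 ((hτ.1 B1 hB1).1 hw1)
        have hw3I := Finset.mem_Icc.1 ((hτ.1 B3 hB3).1 hw3)
        obtain ⟨hc1, hc2, hc3, hc4⟩ := erase_facts hτ hB1 hw1
        obtain ⟨hc1', hc2', hc3', hc4'⟩ := erase_facts hτ hB3 hw3
        have hw3dom : w3 ∈ dom n (B1.erase w1) := by rw [hCC]; exact hc3'
        have hB3plus : τ (insert w3 (B1.erase w1)) = true := by
          rw [hCC, hc4']; exact hB3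
        have hslot3 : RAof n τ B3 w3 ↔ RAof n τ B1 w1 := by
          rw [RAof, RAof, hCC]
        by_cases hra : RAof n τ B1 w1
        · -- right-aligned series : z2's preimage u
          have hge1 := ra_ge hτ hp hptn hB1 hw1 hra
          have hge3 := ra_ge hτ hp hptn hB3 hw3 (hslot3.2 hra)
          have hz1w : z1 = w1 + tn - n := by rw [← hf1, fal_ra hra]
          have hz3w : z3 = w3 + tn - n := by rw [← hf3, fal_ra (hslot3.2 hra)]
          set u := z2 + n - tn with hu
          have huw1 : w1 < u := by omega
          have huw3 : u < w3 := by omega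
          have hun : u ≤ n := by omega
          have huC : u ∉ B1.erase w1 := by
            intro huC
            have huB : u ∈ B1 := Finset.mem_of_mem_erase huC
            by_cases hru : RAof n τ B1 u
            · have : fal n tn τ B1 u ∈ Ct := by
                rw [← him1]; exact Finset.mem_image_of_mem _ huC
              rw [fal_ra hru] at this
              have hval : u + tn - n = z2 := by omega
              rw [hval] at this
              exact hz2Ct this
            · exact hru (pattern hτ hp hpn hB1 hw1 huB huw1 hra)
          have hudom : u ∈ dom n (B1.erase w1) := mem_dom.2 ⟨by omega, hun, huC⟩
          have hplus := ra_flood hτ hB1 hw1 hra hudom (by omega)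
          have := phi_plus_ext hτ hp hpn hptn hB1 hw1 him1 hudom hplus
          rw [if_pos (show RightAligned (series n τ (B1.erase w1)) from hra)] at this
          have hval : u + tn - n = z2 := by omega
          rw [hval, hv2] at this
          simp at this
        · -- left-aligned series
          have hla3 : LAof n τ B3 w3 :=
            la_of_not_ra hτ hp hpn hB3 hw3 (fun h => hra (hslot3.1 h))
          have hz1w : z1 = w1 := by rw [← hf1, fal_la hra]
          have hz3w : z3 = w3 := by rw [← hf3, fal_la (fun h => hra (hslot3.1 h))]
          have hz2C : z2 ∉ B1.erase w1 := by
            intro hz2C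
            have hz2B1 : z2 ∈ B1 := Finset.mem_of_mem_erase hz2C
            by_cases hr2 : RAof n τ B1 z2
            · -- same alignment in B3, then pattern with w3 contradicts
              have hr2' : RAof n τ B3 z2 := by
                have h2d := twoD hτ hp hpn hc1 hc2
                  (c := z2) hz2C hc3 hw3dom (by rw [hc4]; exact hB1) hB3plus
                rw [hc4, hCC, hc4'] at h2d
                exact h2d.1 hr2
              have hz2B3 : z2 ∈ B3 :=
                Finset.mem_of_mem_erase (by rw [← hCC]; exact hz2C)
              have := pattern hτ hp hpn hB3 hz2B3 hw3 (by omega) hr2'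
              exact (fun h => hra (hslot3.1 h)) this
            · have : fal n tn τ B1 z2 ∈ Ct := by
                rw [← him1]; exact Finset.mem_image_of_mem _ hz2C
              rw [fal_la hr2] at this
              exact hz2Ct this
          have hz2dom : z2 ∈ dom n (B1.erase w1) :=
            mem_dom.2 ⟨(mem_dom.1 hd2).1, by omega, hz2C⟩
          have hplus : τ (insert z2 (B1.erase w1)) = true := by
            have hz2dom' : z2 ∈ dom n (B3.erase w3) := by rw [← hCC]; exact hz2dom
            have := la_flood hτ hB3 hw3 hla3 hz2dom' (by omega)
            rwa [← hCC] at this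
          have := phi_plus_ext hτ hp hpn hptn hB1 hw1 him1 hz2dom hplus
          rw [if_neg (show ¬ RightAligned (series n τ (B1.erase w1)) from hra)] at this
          rw [hv2] at this
          simp at this
      · exact mix_false hτ hp hpn hptn hB1 hB3 hw1 hw3 hf1 hf3 him1 him3 hz1Ct hz3Ct
          (by omega) hCtc hCC

end PhiCosig
end S13
namespace S13

section Corr

variable {n tn d p : ℕ} {τ : Finset ℕ → Bool}

lemma align_corr (hτ : IsCoSignotope n d τ) (hp : plusCount τ ≤ p) (hpn : p + d ≤ n)
    (hptn : p + d ≤ tn) {B : Finset ℕ} {x : ℕ} (hB : τ B = true) (hx : x ∈ B) :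
    RightAligned (series tn (phiFun n tn τ)
      ((B.erase x).image (fal n tn τ B))) ↔ RAof n τ B x := by
  classical
  obtain ⟨hC1, hC2, hC3, hC4⟩ := erase_facts hτ hB hx
  set C := B.erase x with hC
  set Ct := C.image (fal n tn τ B) with hCtdef
  have hphi := phi_cosig hτ hp hpn hptn
  have hpphi : plusCount (phiFun n tn τ) ≤ p := by
    rw [phi_plusCount hτ hp hpn hptn]; exact hp
  have hCtI : Ct ⊆ Finset.Icc 1 tn := by
    intro e he
    obtain ⟨c, hc, rfl⟩ := Finset.mem_image.1 he
    exact Finset.mem_Icc.2 (fal_bounds hτ hp hpn hptn hB (Finset.mem_of_mem_erase hc))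
  have hCtc : Ct.card + 1 = d := by
    rw [hCtdef, Finset.card_image_of_injOn
      ((fal_injOn hτ hp hpn hptn hB).mono (by
        intro w hw
        exact Finset.mem_coe.2 (Finset.mem_of_mem_erase (Finset.mem_coe.1 hw))))]
    exact hC2
  have hne : (dom n C).Nonempty := ⟨x, hC3⟩
  -- helper: the `phi`-plus obtained from a plus extension `insert y C`
  have hextval : ∀ y ∈ dom n C, τ (insert y C) = true →
      phiFun n tn τ (insert (if RAof n τ B x then y + tn - n else y) Ct) = true := by
    intro y hy hyp
    have := phi_plus_ext hτ hp hpn hptn hB hx rfl hy hyp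
    rwa [show (if RightAligned (series n τ (B.erase x)) then y + tn - n else y)
      = (if RAof n τ B x then y + tn - n else y) from rfl] at this
  -- any such phi-plus element is not in Ct, ≥ 1, ≤ tn
  have hval_dom : ∀ v : ℕ, phiFun n tn τ (insert v Ct) = true → v ∈ dom tn Ct := by
    intro v hv
    have hsupp := hphi.1 _ hv
    have hvI : v ∈ Finset.Icc 1 tn := hsupp.1 (Finset.mem_insert_self _ _)
    rw [mem_dom]
    refine ⟨(Finset.mem_Icc.1 hvI).1, (Finset.mem_Icc.1 hvI).2, ?_⟩
    intro hvCt
    have : (insert v Ct).card = Ct.card := by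
      rw [Finset.insert_eq_self.2 hvCt]
    omega
  constructor
  · -- RightAligned tn-series → RAof
    intro hrat
    by_contra hra
    have hla := la_of_not_ra hτ hp hpn hB hx hra
    -- minimum of dom n C is a plus
    set m := (dom n C).min' hne with hm
    have hmdom : m ∈ dom n C := Finset.min'_mem _ _
    have hmplus := la_flood hτ hB hx hla hmdom (Finset.min'_le _ _ hC3)
    have hphim : phiFun n tn τ (insert m Ct) = true := by
      have := hextval m hmdom hmplus
      rwa [if_neg hra] at this
    have hmd := hval_dom m hphim
    -- m is the minimum of dom tn Ct
    have hnet : (dom tn Ct).Nonempty := ⟨m, hmd⟩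
    have hmin : (dom tn Ct).min' hnet = m := by
      apply le_antisymm (Finset.min'_le _ _ hmd)
      by_contra hlt
      push_neg at hlt
      set z := (dom tn Ct).min' hnet with hz
      have hzd := Finset.min'_mem (dom tn Ct) hnet
      rw [mem_dom] at hzd
      have hzm : z < m := hlt
      have hzC : z ∈ C := by
        by_contra hzC
        have : z ∈ dom n C := mem_dom.2 ⟨hzd.1, by
          have := (mem_dom.1 hmdom).2.1
          omega, hzC⟩
        have := Finset.min'_le _ _ this
        omega
      have hzB : z ∈ B := Finset.mem_of_mem_erase hzC
      have hzra : ¬ RAof n τ B z := by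
        intro h
        have hzx : z < x := by
          have := Finset.min'_le _ _ hC3
          omega
        exact hra (pattern hτ hp hpn hB hzB hx hzx h)
      have : fal n tn τ B z ∈ Ct := Finset.mem_image_of_mem _ hzC
      rw [fal_la hzra] at this
      exact hzd.2.2 this
    -- so the tn-series is LeftAligned, contradiction
    have hlat : LeftAligned (series tn (phiFun n tn τ) Ct) := by
      rw [la_iff_min hphi hpphi hptn hCtI hCtc hnet ⟨m, hmd, hphim⟩, hmin]
      exact hphim
    exact not_ra_la hrat hlat
  · -- RAof → RightAligned tn-series
    intro hra
    set M := (dom n C).max' hne with hM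
    have hMdom : M ∈ dom n C := Finset.max'_mem _ _
    have hMplus := ra_flood hτ hB hx hra hMdom (Finset.le_max' _ _ hC3)
    have hphiM : phiFun n tn τ (insert (M + tn - n) Ct) = true := by
      have := hextval M hMdom hMplus
      rwa [if_pos hra] at this
    have hMd := hval_dom _ hphiM
    have hnet : (dom tn Ct).Nonempty := ⟨_, hMd⟩
    have hgex := ra_ge hτ hp hptn hB hx hra
    have hxM : x ≤ M := Finset.le_max' _ _ hC3
    have hmax : (dom tn Ct).max' hnet = M + tn - n := by
      apply le_antisymm
      · by_contra hlt
        push_neg at hlt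
        set z := (dom tn Ct).max' hnet with hz
        have hzd := Finset.max'_mem (dom tn Ct) hnet
        rw [mem_dom] at hzd
        have hzM : M + tn - n < z := hlt
        set u := z + n - tn with hu
        have huM : M < u := by omega
        have hun : u ≤ n := by omega
        have huC : u ∈ C := by
          by_contra huC
          have : u ∈ dom n C := mem_dom.2 ⟨by omega, hun, huC⟩
          have := Finset.le_max' _ _ this
          omega
        have huB : u ∈ B := Finset.mem_of_mem_erase huC
        have hura : RAof n τ B u := pattern hτ hp hpn hB hx huB (by omega) hra
        have : fal n tn τ B u ∈ Ct := Finset.mem_image_of_mem _ huC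
        rw [fal_ra hura] at this
        have hval : u + tn - n = z := by omega
        rw [hval] at this
        exact hzd.2.2 this
      · exact Finset.le_max' _ _ hMd
    rw [ra_iff_max hphi hpphi hptn hCtI hCtc hnet ⟨_, hMd, hphiM⟩, hmax]
    exact hphiM

lemma gamma_comp (hτ : IsCoSignotope n d τ) (hp : plusCount τ ≤ p) (hpn : p + d ≤ n)
    (hptn : p + d ≤ tn) {B : Finset ℕ} (hB : τ B = true) :
    gammaFun tn n (phiFun n tn τ) (gammaFun n tn τ B) = B := by
  classical
  rw [gammaFun_eq n tn τ B, gammaFun_eq tn n (phiFun n tn τ), Finset.image_image]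
  conv_rhs => rw [← Finset.image_id (s := B)]
  apply Finset.image_congr
  intro x hx'
  have hx : x ∈ B := Finset.mem_coe.1 hx'
  simp only [Function.comp_apply, id_eq]
  have herase : (B.image (fal n tn τ B)).erase (fal n tn τ B x)
      = (B.erase x).image (fal n tn τ B) := by
    have := gamma_erase_eq hτ hp hpn hptn hB hx
    rwa [gammaFun_eq] at this
  have hcond : RAof tn (phiFun n tn τ) (B.image (fal n tn τ B)) (fal n tn τ B x)
      ↔ RAof n τ B x := by
    rw [RAof, herase]
    exact align_corr hτ hp hpn hptn hB hx
  by_cases hra : RAof n τ B x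
  · rw [fal, if_pos (hcond.2 hra), fal_ra hra]
    have := ra_ge hτ hp hptn hB hx hra
    omega
  · rw [fal, if_neg (fun h => hra (hcond.1 h)), fal_la hra]

lemma phi_comp (hτ : IsCoSignotope n d τ) (hp : plusCount τ ≤ p) (hpn : p + d ≤ n)
    (hptn : p + d ≤ tn) : phiFun tn n (phiFun n tn τ) = τ := by
  funext A
  have hiff : phiFun tn n (phiFun n tn τ) A = true ↔ τ A = true := by
    rw [phi_plus_iff]
    constructor
    · rintro ⟨At, hAt, rfl⟩
      obtain ⟨B, hB, rfl⟩ := phi_plus_iff.1 hAt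
      rw [gamma_comp hτ hp hpn hptn hB]
      exact hB
    · intro hA
      exact ⟨gammaFun n tn τ A, phi_plus_iff.2 ⟨A, hA, rfl⟩,
        (gamma_comp hτ hp hpn hptn hA).symm⟩
  cases h : phiFun tn n (phiFun n tn τ) A <;> cases h2 : τ A <;> simp_all

end Corr
end S13
namespace S13

section Step

variable {n tn d p : ℕ}

lemma align_step {σ σ' : Finset ℕ → Bool} (hσ : IsCoSignotope n d σ)
    (hσ' : IsCoSignotope n d σ') (hpσ : plusCount σ ≤ p) (hpσ' : plusCount σ' ≤ p)
    (hpn : p + d ≤ n) (hmono : ∀ A, σ A = true → σ' A = true)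
    {B : Finset ℕ} {x : ℕ} (hB : σ B = true) (hx : x ∈ B) :
    RAof n σ B x ↔ RAof n σ' B x := by
  obtain ⟨hC1, hC2, hC3, hC4⟩ := erase_facts hσ hB hx
  have hB' : σ' B = true := hmono B hB
  have hne : (dom n (B.erase x)).Nonempty := ⟨x, hC3⟩
  have hplus : ∃ b ∈ dom n (B.erase x), σ (insert b (B.erase x)) = true :=
    ⟨x, hC3, by rw [hC4]; exact hB⟩
  have hplus' : ∃ b ∈ dom n (B.erase x), σ' (insert b (B.erase x)) = true :=
    ⟨x, hC3, by rw [hC4]; exact hB'⟩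
  constructor
  · intro h
    rw [RAof] at h ⊢
    rw [ra_iff_max hσ' hpσ' hpn hC1 hC2 hne hplus']
    rw [ra_iff_max hσ hpσ hpn hC1 hC2 hne hplus] at h
    exact hmono _ h
  · intro h
    by_contra hra
    have hla : LAof n σ B x := la_of_not_ra hσ hpσ hpn hB hx hra
    rw [LAof, la_iff_min hσ hpσ hpn hC1 hC2 hne hplus] at hla
    have hla' : LeftAligned (series n σ' (B.erase x)) := by
      rw [la_iff_min hσ' hpσ' hpn hC1 hC2 hne hplus']
      exact hmono _ hla
    rw [RAof] at h
    exact not_ra_la h hla'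

lemma gamma_step {σ σ' : Finset ℕ → Bool} (hσ : IsCoSignotope n d σ)
    (hσ' : IsCoSignotope n d σ') (hpσ : plusCount σ ≤ p) (hpσ' : plusCount σ' ≤ p)
    (hpn : p + d ≤ n) (hmono : ∀ A, σ A = true → σ' A = true)
    {B : Finset ℕ} (hB : σ B = true) :
    gammaFun n tn σ B = gammaFun n tn σ' B := by
  classical
  rw [gammaFun_eq, gammaFun_eq]
  apply Finset.image_congr
  intro x hx'
  have hx : x ∈ B := Finset.mem_coe.1 hx'
  have hiff := align_step hσ hσ' hpσ hpσ' hpn hmono hB hx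
  by_cases h : RAof n σ B x
  · rw [fal, if_pos h, fal, if_pos (hiff.1 h)]
  · rw [fal, if_neg h, fal, if_neg (fun hh => h (hiff.2 hh))]

lemma step_phi {σ σ' : Finset ℕ → Bool} (hσ : IsCoSignotope n d σ)
    (hσ' : IsCoSignotope n d σ') (hpσ : plusCount σ ≤ p) (hpσ' : plusCount σ' ≤ p)
    (hpn : p + d ≤ n) (hptn : p + d ≤ tn) (hss : SingleStep σ σ') :
    SingleStep (phiFun n tn σ) (phiFun n tn σ') := by
  have hmono : ∀ A, σ A = true → σ' A = true := fun A hA => hss.1.subset hA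
  have hsub : {A | phiFun n tn σ A = true} ⊆ {A | phiFun n tn σ' A = true} := by
    intro A hA
    rw [Set.mem_setOf_eq, phi_plus_iff] at hA ⊢
    obtain ⟨B, hB, rfl⟩ := hA
    exact ⟨B, hmono B hB, gamma_step hσ hσ' hpσ hpσ' hpn hmono hB⟩
  have hcount : plusCount (phiFun n tn σ') = plusCount (phiFun n tn σ) + 1 := by
    rw [phi_plusCount hσ hpσ hpn hptn, phi_plusCount hσ' hpσ' hpn hptn]
    exact hss.2
  refine ⟨Set.ssubset_iff_subset_ne.2 ⟨hsub, ?_⟩, hcount⟩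
  intro heq
  have : plusCount (phiFun n tn σ) = plusCount (phiFun n tn σ') := by
    rw [plusCount, plusCount, heq]
  omega

lemma bruhat_phi (hdn : d < n) (hdtn : d < tn) (hpn : p + d ≤ n) (hptn : p + d ≤ tn)
    {σ σ' : Finset ℕ → Bool} (hσ : σ ∈ coSigSetLe n d p)
    (hσ' : σ' ∈ coSigSetLe n d p) (h : CoBruhatLe n d σ σ') :
    CoBruhatLe tn d (phiFun n tn σ) (phiFun n tn σ') := by
  have key : ∀ κ, CoBruhatLe n d σ κ → κ ∈ coSigSetLe n d p →
      CoBruhatLe tn d (phiFun n tn σ) (phiFun n tn κ) := by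
    intro κ hκ
    induction hκ with
    | refl => intro _; exact Relation.ReflTransGen.refl
    | @tail b c hab hbc ih =>
      intro hcmem
      have hpb : plusCount b ≤ p := by
        have h1 := hbc.2.2.2
        have h2 := hcmem.2
        omega
      have hbmem : b ∈ coSigSetLe n d p := ⟨hbc.1, hpb⟩
      refine Relation.ReflTransGen.tail (ih hbmem) ?_
      exact ⟨phi_cosig hbc.1 hpb hpn hptn,
        phi_cosig hbc.2.1 hcmem.2 hpn hptn,
        step_phi hbc.1 hbc.2.1 hpb hcmem.2 hpn hptn hbc.2.2⟩
  exact key σ' h hσ'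

lemma phi_mapsTo (hdn : d < n) (hdtn : d < tn) (hpn : p + d ≤ n) (hptn : p + d ≤ tn) :
    Set.MapsTo (phiFun n tn) (coSigSetLe n d p) (coSigSetLe tn d p) := by
  intro τ hτ
  exact ⟨phi_cosig hτ.1 hτ.2 hpn hptn, by
    rw [phi_plusCount hτ.1 hτ.2 hpn hptn]; exact hτ.2⟩

end Step
end S13


/-- **Lemma (the simple bijection).** The map `φ_{n,ñ,d,p}`, sending `τ` to the sign
function whose `+`-subsets are the sets `γ_{τ,ñ}(B)` for `B ∈ τ⁻¹(+)`, is a bijection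
between `𝒮̄_{≤p}(n,d)` and `𝒮̄_{≤p}(ñ,d)` preserving the complementary higher Bruhat
order. -/
theorem statement13 (n tn d p : ℕ) (hdn : d < n) (hdtn : d < tn)
    (hpn : p + d ≤ n) (hptn : p + d ≤ tn) :
    Set.BijOn (phiFun n tn) (coSigSetLe n d p) (coSigSetLe tn d p) ∧
    ∀ σ ∈ coSigSetLe n d p, ∀ σ' ∈ coSigSetLe n d p,
      (CoBruhatLe n d σ σ' ↔ CoBruhatLe tn d (phiFun n tn σ) (phiFun n tn σ')) := by
  have hmt := S13.phi_mapsTo (n := n) (tn := tn) (d := d) (p := p) hdn hdtn hpn hptn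
  have hmt' := S13.phi_mapsTo (n := tn) (tn := n) (d := d) (p := p) hdtn hdn hptn hpn
  constructor
  · refine Set.InvOn.bijOn ⟨?_, ?_⟩ hmt hmt'
    · intro τ hτ
      exact S13.phi_comp hτ.1 hτ.2 hpn hptn
    · intro τ hτ
      exact S13.phi_comp hτ.1 hτ.2 hptn hpn
  · intro σ hσ σ' hσ'
    constructor
    · exact S13.bruhat_phi hdn hdtn hpn hptn hσ hσ'
    · intro h
      have := S13.bruhat_phi hdtn hdn hptn hpn (hmt hσ) (hmt hσ') h
      rwa [S13.phi_comp hσ.1 hσ.2 hpn hptn, S13.phi_comp hσ'.1 hσ'.2 hpn hptn] at this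
end

section
/- For every integer $n \ge 1$: $|\mathcal{S}_{\le 2}(n,1)| = 1 + n + \binom{n}{2}$ and $|\mathcal{S}_{\le 2}(n+1,2)| = 1 + n + \binom{n}{2} + (n-1)$. In particular, for $n \ge 2$ there is no bijection between $\mathcal{S}_{\le 2}(n,1)$ and $\mathcal{S}_{\le 2}(n+1,2)$, showing that the condition $p \le \min\{r,\tilde{r}\}$ in the main bijection theorem cannot be dropped. -/
lemma signChanges_le_tail (l : List Bool) : signChanges l ≤ l.tail.length := by
  calc signChanges l ≤ (l.zip l.tail).length := List.length_filter_le _ _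
  _ ≤ l.tail.length := by rw [List.length_zip]; omega

lemma signChanges3 : ∀ x y z : Bool, signChanges [x,y,z] ≤ 1 ↔ (y = x ∨ y = z) := by decide

lemma pair_ext {a b c d : ℕ} : ({a,b} : Finset ℕ) = {c,d} ↔ (a=c∧b=d)∨(a=d∧b=c) := by
  constructor
  · intro h
    have h1 : a ∈ ({c,d} : Finset ℕ) := h ▸ (by simp)
    have h2 : b ∈ ({c,d} : Finset ℕ) := h ▸ (by simp)
    have h3 : c ∈ ({a,b} : Finset ℕ) := h ▸ (by simp)
    have h4 : d ∈ ({a,b} : Finset ℕ) := h ▸ (by simp)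
    simp only [Finset.mem_insert, Finset.mem_singleton] at h1 h2 h3 h4
    omega
  · rintro (⟨rfl, rfl⟩ | ⟨rfl, rfl⟩)
    · rfl
    · exact Finset.pair_comm a b

lemma sort_triple {a b c : ℕ} (hab : a < b) (hbc : b < c) :
    ({a,b,c} : Finset ℕ).sort (· ≤ ·) = [a,b,c] := by
  have : ({a,b,c} : Finset ℕ) = ([a,b,c] : List ℕ).toFinset := by simp
  rw [this, List.toFinset_sort]
  · simp [List.pairwise_cons]; omega
  · simp; omega

lemma erase_triple {a b c : ℕ} (hab : a < b) (hbc : b < c) :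
    ({a,b,c} : Finset ℕ).erase a = {b,c} ∧ ({a,b,c} : Finset ℕ).erase b = {a,c}
    ∧ ({a,b,c} : Finset ℕ).erase c = {a,b} := by
  refine ⟨?_, ?_, ?_⟩ <;> (ext x; simp [Finset.mem_erase]; omega)

def toFun (s : Finset (Finset ℕ)) : Finset ℕ → Bool := fun A => decide (A ∈ s)

@[simp] lemma toFun_eq_true {s : Finset (Finset ℕ)} {A : Finset ℕ} :
    toFun s A = true ↔ A ∈ s := by simp [toFun]

lemma toFun_inj : Function.Injective toFun := by
  intro s t h
  ext A
  constructor <;> intro hA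
  · have := congrFun h A; simp [toFun, hA] at this; exact this
  · have := congrFun h A; simp [toFun, hA] at this; exact this

lemma plusCount_toFun (s : Finset (Finset ℕ)) : plusCount (toFun s) = s.card := by
  have : {A : Finset ℕ | toFun s A = true} = ↑s := by ext A; simp
  rw [plusCount, this, Set.ncard_coe_finset]

lemma triple_list (σ : Finset ℕ → Bool) {a b c : ℕ} (hab : a < b) (hbc : b < c) :
    ((({a,b,c} : Finset ℕ).sort (· ≤ ·)).map fun x => σ (({a,b,c} : Finset ℕ).erase x))
      = [σ {b,c}, σ {a,c}, σ {a,b}] := by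
  obtain ⟨e1, e2, e3⟩ := erase_triple hab hbc
  rw [sort_triple hab hbc]
  simp [e1, e2, e3]

lemma triple_subset {n a b c : ℕ} (h1 : 1 ≤ a) (hab : a < b) (hbc : b < c) (hc : c ≤ n) :
    ({a,b,c} : Finset ℕ) ⊆ Finset.Icc 1 n := by
  intro x hx; simp at hx; simp; omega

lemma triple_card {a b c : ℕ} (hab : a < b) (hbc : b < c) : ({a,b,c} : Finset ℕ).card = 3 := by
  rw [Finset.card_insert_of_notMem (by simp; omega), Finset.card_insert_of_notMem (by simp; omega),
    Finset.card_singleton]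

lemma triple_of_sig {n : ℕ} {σ : Finset ℕ → Bool} (h : IsSignotope n 2 σ) {a b c : ℕ}
    (h1 : 1 ≤ a) (hab : a < b) (hbc : b < c) (hc : c ≤ n) :
    σ {a,c} = σ {b,c} ∨ σ {a,c} = σ {a,b} := by
  have := h.2 {a,b,c} (triple_subset h1 hab hbc hc) (triple_card hab hbc)
  rw [triple_list σ hab hbc, signChanges3] at this
  tauto

lemma sig_of_triple {n : ℕ} {σ : Finset ℕ → Bool}
    (hs : ∀ A, σ A = true → A ⊆ Finset.Icc 1 n ∧ A.card = 2)
    (ht : ∀ a b c, 1 ≤ a → a < b → b < c → c ≤ n → σ {a,c} = σ {b,c} ∨ σ {a,c} = σ {a,b}) :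
    IsSignotope n 2 σ := by
  refine ⟨hs, fun X hX hcard => ?_⟩
  obtain ⟨x, y, z, hxy, hxz, hyz, rfl⟩ := Finset.card_eq_three.mp hcard
  -- order them
  have hx : x ∈ Finset.Icc 1 n := hX (by simp)
  have hy : y ∈ Finset.Icc 1 n := hX (by simp)
  have hz : z ∈ Finset.Icc 1 n := hX (by simp)
  simp only [Finset.mem_Icc] at hx hy hz
  -- wlog ordering: consider all 6 cases
  have key : ∀ a b c : ℕ, 1 ≤ a → a < b → b < c → c ≤ n → ({x,y,z} : Finset ℕ) = {a,b,c} →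
      signChanges ((({x,y,z} : Finset ℕ).sort (· ≤ ·)).map fun w => σ (({x,y,z} : Finset ℕ).erase w)) ≤ 1 := by
    intro a b c h1 hab hbc hc heq
    rw [heq, triple_list σ hab hbc, signChanges3]
    have := ht a b c h1 hab hbc hc
    tauto
  rcases Nat.lt_trichotomy x y with h1 | h1 | h1 <;> [skip; omega; skip] <;>
    rcases Nat.lt_trichotomy y z with h2 | h2 | h2 <;> [skip; omega; skip; skip; omega; skip] <;>
    rcases Nat.lt_trichotomy x z with h3 | h3 | h3 <;> try omega
  · exact key x y z (by omega) h1 h2 (by omega) rfl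
  · exact key x z y (by omega) h3 (by omega) (by omega) (by ext w; simp; tauto)
  · exact key z x y (by omega) (by omega) h1 (by omega) (by ext w; simp; tauto)
  · exact key y x z (by omega) h1 (by omega) (by omega) (by ext w; simp; tauto)
  · exact key y z x (by omega) h2 (by omega) (by omega) (by ext w; simp; tauto)
  · exact key z y x (by omega) h2 h1 (by omega) (by ext w; simp; tauto)

open scoped Classical
-- representation
lemma repr_lemma {n r p : ℕ} {σ : Finset ℕ → Bool} (h : σ ∈ sigSetLe n r p) :
    ∃ s : Finset (Finset ℕ), σ = toFun s ∧ s.card ≤ p ∧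
      ∀ A ∈ s, A ⊆ Finset.Icc 1 n ∧ A.card = r := by
  classical
  refine ⟨(Finset.Icc 1 n).powerset.filter (fun A => σ A = true), ?_, ?_, ?_⟩
  · funext A
    by_cases hA : σ A = true
    · simp [toFun, Finset.mem_filter, Finset.mem_powerset, hA, (h.1.1 A hA).1]
    · simp only [Bool.not_eq_true] at hA
      simp [toFun, Finset.mem_filter, hA]
  · have : {A : Finset ℕ | σ A = true}
        = ↑((Finset.Icc 1 n).powerset.filter (fun A => σ A = true)) := by
      ext A
      simp only [Set.mem_setOf_eq, Finset.coe_filter, Finset.mem_powerset, Set.mem_setOf_eq]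
      exact ⟨fun hA => ⟨(h.1.1 A hA).1, hA⟩, fun hA => hA.2⟩
    have h2 := h.2
    rwa [plusCount, this, Set.ncard_coe_finset] at h2
  · intro A hA
    simp only [Finset.mem_filter] at hA
    exact h.1.1 A hA.2

-- the r = 1 count
lemma len2_ok {σ : Finset ℕ → Bool} (X : Finset ℕ) (hcard : X.card = 2) :
    signChanges ((X.sort (· ≤ ·)).map fun x => σ (X.erase x)) ≤ 1 := by
  have := signChanges_le_tail ((X.sort (· ≤ ·)).map fun x => σ (X.erase x))
  have hl : ((X.sort (· ≤ ·)).map fun x => σ (X.erase x)).length = 2 := by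
    rw [List.length_map, Finset.length_sort, hcard]
  rw [List.length_tail, hl] at this
  omega

noncomputable def V1 (n : ℕ) : Finset (Finset (Finset ℕ)) :=
  ((Finset.Icc 1 n).image fun a => ({a} : Finset ℕ)).powerset.filter (fun s => s.card ≤ 2)

lemma sig1_eq (n : ℕ) : sigSetLe n 1 2 = ↑((V1 n).image toFun) := by
  classical
  ext σ
  simp only [Finset.coe_image, Set.mem_image, Finset.mem_coe]
  constructor
  · intro h
    obtain ⟨s, rfl, hcard, hmem⟩ := repr_lemma h
    refine ⟨s, ?_, rfl⟩
    simp only [V1, Finset.mem_filter, Finset.mem_powerset]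
    refine ⟨fun A hA => ?_, hcard⟩
    obtain ⟨hsub, hc⟩ := hmem A hA
    obtain ⟨a, rfl⟩ := Finset.card_eq_one.mp hc
    simp only [Finset.mem_image]
    exact ⟨a, hsub (by simp), rfl⟩
  · rintro ⟨s, hs, rfl⟩
    simp only [V1, Finset.mem_filter, Finset.mem_powerset] at hs
    refine ⟨⟨fun A hA => ?_, fun X _ hX => len2_ok X hX⟩, ?_⟩
    · rw [toFun_eq_true] at hA
      obtain ⟨a, ha, rfl⟩ := Finset.mem_image.mp (hs.1 hA)
      exact ⟨by simpa using ha, by simp⟩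
    · rw [plusCount_toFun]; exact hs.2

lemma V1_card (n : ℕ) : (V1 n).card = 1 + n + n.choose 2 := by
  classical
  set T := (Finset.Icc 1 n).image fun a => ({a} : Finset ℕ) with hT
  have hTcard : T.card = n := by
    rw [hT, Finset.card_image_of_injective _ (fun a b h => by simpa using h)]
    simp
  have : V1 n = T.powersetCard 0 ∪ T.powersetCard 1 ∪ T.powersetCard 2 := by
    ext s
    simp only [V1, Finset.mem_filter, Finset.mem_powerset, Finset.mem_union,
      Finset.mem_powersetCard, ← hT]
    constructor
    · rintro ⟨h1, h2⟩
      interval_cases h : s.card <;> tauto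
    · rintro ((⟨h1, h2⟩ | ⟨h1, h2⟩) | ⟨h1, h2⟩) <;> exact ⟨h1, by omega⟩
  rw [this, Finset.card_union_of_disjoint, Finset.card_union_of_disjoint]
  · simp [Finset.card_powersetCard, hTcard]
  · rw [Finset.disjoint_left]
    intro s h1 h2
    simp only [Finset.mem_powersetCard] at h1 h2
    omega
  · rw [Finset.disjoint_left]
    intro s h1 h2
    simp only [Finset.mem_union, Finset.mem_powersetCard] at h1 h2
    omega

lemma sig1_ncard (n : ℕ) : (sigSetLe n 1 2).ncard = 1 + n + n.choose 2 := by
  classical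
  rw [sig1_eq, Set.ncard_coe_finset, Finset.card_image_of_injective _ toFun_inj, V1_card]

def pr (a : ℕ) : Finset ℕ := {a, a+1}

noncomputable def Ipairs (n : ℕ) : Finset (ℕ × ℕ) :=
  ((Finset.Icc 1 n) ×ˢ (Finset.Icc 1 n)).filter fun p => p.1 + 2 ≤ p.2

lemma Ipairs_card' (n : ℕ) : (Ipairs n).card = ((Finset.Icc 1 (n-1)).powersetCard 2).card := by
  apply Finset.card_bij (fun p _ => ({p.1, p.2 - 1} : Finset ℕ))
  · rintro ⟨a, b⟩ hp
    simp only [Ipairs, Finset.mem_filter, Finset.mem_product, Finset.mem_Icc] at hp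
    simp only [Finset.mem_powersetCard]
    constructor
    · intro x hx; simp only [Finset.mem_insert, Finset.mem_singleton] at hx
      simp only [Finset.mem_Icc]; omega
    · rw [Finset.card_pair (by omega)]
  · rintro ⟨a, b⟩ ha ⟨c, d⟩ hc h
    simp only [Ipairs, Finset.mem_filter, Finset.mem_product, Finset.mem_Icc] at ha hc
    rw [pair_ext] at h
    simp only [Prod.mk.injEq]
    omega
  · intro s hs
    simp only [Finset.mem_powersetCard] at hs
    obtain ⟨x, y, hxy, rfl⟩ := Finset.card_eq_two.mp hs.2
    have hx : x ∈ Finset.Icc 1 (n-1) := hs.1 (by simp)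
    have hy : y ∈ Finset.Icc 1 (n-1) := hs.1 (by simp)
    simp only [Finset.mem_Icc] at hx hy
    rcases Nat.lt_or_ge x y with h | h
    · refine ⟨(x, y+1), ?_, ?_⟩
      · simp only [Ipairs, Finset.mem_filter, Finset.mem_product, Finset.mem_Icc]; omega
      · rw [pair_ext]; omega
    · refine ⟨(y, x+1), ?_, ?_⟩
      · simp only [Ipairs, Finset.mem_filter, Finset.mem_product, Finset.mem_Icc]; omega
      · rw [pair_ext]; omega

lemma Ipairs_card (n : ℕ) : (Ipairs n).card = (n-1).choose 2 := by
  rw [Ipairs_card', Finset.card_powersetCard, Nat.card_Icc, Nat.add_sub_cancel]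

noncomputable def V2 (n : ℕ) : Finset (Finset (Finset ℕ)) :=
  {(∅ : Finset (Finset ℕ))}
  ∪ (Finset.Icc 1 n).image (fun a => ({pr a} : Finset (Finset ℕ)))
  ∪ (Ipairs n).image (fun p => ({pr p.1, pr p.2} : Finset (Finset ℕ)))
  ∪ (Finset.Icc 1 (n-1)).image (fun a => ({pr a, {a, a+2}} : Finset (Finset ℕ)))
  ∪ (Finset.Icc 1 (n-1)).image (fun a => ({pr (a+1), {a, a+2}} : Finset (Finset ℕ)))

lemma mem_V2_iff {n : ℕ} {s : Finset (Finset ℕ)} : s ∈ V2 n ↔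
    s = ∅ ∨ (∃ a, (1 ≤ a ∧ a ≤ n) ∧ s = {pr a})
    ∨ (∃ a b, ((1 ≤ a ∧ a ≤ n) ∧ (1 ≤ b ∧ b ≤ n) ∧ a + 2 ≤ b) ∧ s = {pr a, pr b})
    ∨ (∃ a, (1 ≤ a ∧ a ≤ n - 1) ∧ s = {pr a, {a, a+2}})
    ∨ (∃ a, (1 ≤ a ∧ a ≤ n - 1) ∧ s = {pr (a+1), {a, a+2}}) := by
  simp only [V2, Finset.mem_union, Finset.mem_singleton, Finset.mem_image, Ipairs,
    Finset.mem_filter, Finset.mem_product, Finset.mem_Icc, Prod.exists]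
  constructor
  · rintro ((((h | h) | h) | h) | h)
    · exact Or.inl h
    · obtain ⟨a, ha, rfl⟩ := h; exact Or.inr (Or.inl ⟨a, ha, rfl⟩)
    · obtain ⟨a, b, ⟨⟨ha, hb⟩, hab⟩, rfl⟩ := h
      exact Or.inr (Or.inr (Or.inl ⟨a, b, ⟨ha, hb, hab⟩, rfl⟩))
    · obtain ⟨a, ha, rfl⟩ := h; exact Or.inr (Or.inr (Or.inr (Or.inl ⟨a, ha, rfl⟩)))
    · obtain ⟨a, ha, rfl⟩ := h; exact Or.inr (Or.inr (Or.inr (Or.inr ⟨a, ha, rfl⟩)))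
  · rintro (h | ⟨a, ha, rfl⟩ | ⟨a, b, ⟨ha, hb, hab⟩, rfl⟩ | ⟨a, ha, rfl⟩ | ⟨a, ha, rfl⟩)
    · exact Or.inl (Or.inl (Or.inl (Or.inl h)))
    · exact Or.inl (Or.inl (Or.inl (Or.inr ⟨a, ha, rfl⟩)))
    · exact Or.inl (Or.inl (Or.inr ⟨a, b, ⟨⟨ha, hb⟩, hab⟩, rfl⟩))
    · exact Or.inl (Or.inr ⟨a, ha, rfl⟩)
    · exact Or.inr ⟨a, ha, rfl⟩

lemma V2_sound {n : ℕ} {s : Finset (Finset ℕ)} (hs : s ∈ V2 n) :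
    toFun s ∈ sigSetLe (n+1) 2 2 := by
  have hpair : ∀ x y : ℕ, x < y → 1 ≤ x → y ≤ n+1 →
      ({x,y} : Finset ℕ) ⊆ Finset.Icc 1 (n+1) ∧ ({x,y} : Finset ℕ).card = 2 := by
    intro x y h1 h2 h3
    refine ⟨fun w hw => ?_, Finset.card_pair (by omega)⟩
    simp only [Finset.mem_insert, Finset.mem_singleton] at hw
    simp only [Finset.mem_Icc]; omega
  rw [mem_V2_iff] at hs
  have hmem : (∀ A ∈ s, A ⊆ Finset.Icc 1 (n+1) ∧ A.card = 2) ∧ s.card ≤ 2 := by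
    rcases hs with rfl | ⟨a, ha, rfl⟩ | ⟨a, b, ⟨ha, hb, hab⟩, rfl⟩ | ⟨a, ha, rfl⟩ | ⟨a, ha, rfl⟩
    · simp
    · refine ⟨fun A hA => ?_, by simp⟩
      simp only [Finset.mem_singleton, pr] at hA
      subst hA; exact hpair _ _ (by omega) (by omega) (by omega)
    all_goals refine ⟨fun A hA => ?_, (Finset.card_insert_le _ _).trans (by simp)⟩
    all_goals simp only [Finset.mem_insert, Finset.mem_singleton, pr] at hA
    all_goals rcases hA with rfl | rfl <;> exact hpair _ _ (by omega) (by omega) (by omega)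
  refine ⟨sig_of_triple (fun A hA => hmem.1 A (toFun_eq_true.mp hA)) ?_, ?_⟩
  · intro a b c h1 hab hbc hc
    rcases hs with rfl | ⟨u, hu, rfl⟩ | ⟨u, v, ⟨hu, hv, huv⟩, rfl⟩ | ⟨u, hu, rfl⟩ | ⟨u, hu, rfl⟩
    · simp [toFun]
    all_goals simp only [toFun, decide_eq_decide, Finset.mem_insert, Finset.mem_singleton,
        pr, pair_ext] <;> omega
  · rw [plusCount_toFun]; exact hmem.2

lemma pair_of_card_two {A : Finset ℕ} (h : A.card = 2) : ∃ x y, x < y ∧ A = {x, y} := by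
  obtain ⟨x, y, hxy, rfl⟩ := Finset.card_eq_two.mp h
  rcases Nat.lt_or_ge x y with h | h
  · exact ⟨x, y, h, rfl⟩
  · exact ⟨y, x, by omega, Finset.pair_comm x y⟩

lemma V2_complete {n : ℕ} {s : Finset (Finset ℕ)} (hsig : IsSignotope (n+1) 2 (toFun s))
    (hcard : s.card ≤ 2) : s ∈ V2 n := by
  have hbounds : ∀ A ∈ s, ∃ x y, x < y ∧ 1 ≤ x ∧ y ≤ n+1 ∧ A = {x,y} := by
    intro A hA
    obtain ⟨hsub, hc⟩ := hsig.1 A (by simp [hA])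
    obtain ⟨x, y, hxy, rfl⟩ := pair_of_card_two hc
    have hx := hsub (by simp : x ∈ ({x,y} : Finset ℕ))
    have hy := hsub (by simp : y ∈ ({x,y} : Finset ℕ))
    simp only [Finset.mem_Icc] at hx hy
    exact ⟨x, y, hxy, hx.1, hy.2, rfl⟩
  -- the gap lemma
  have gap : ∀ x c y : ℕ, ({x,y} : Finset ℕ) ∈ s → 1 ≤ x → x < c → c < y → y ≤ n+1 →
      ({x,c} : Finset ℕ) ∈ s ∨ ({c,y} : Finset ℕ) ∈ s := by
    intro x c y hmem h1 h2 h3 h4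
    have := triple_of_sig hsig h1 h2 h3 h4
    simp only [toFun, decide_eq_decide] at this
    tauto
  rw [mem_V2_iff]
  interval_cases hc : s.card
  · left; exact Finset.card_eq_zero.mp hc
  · -- one plus pair
    obtain ⟨A, rfl⟩ := Finset.card_eq_one.mp hc
    obtain ⟨x, y, hxy, h1, h2, rfl⟩ := hbounds A (by simp)
    have hy : y = x + 1 := by
      by_contra hne
      rcases gap x (x+1) y (by simp) h1 (by omega) (by omega) h2 with h | h <;>
        · rw [Finset.mem_singleton, pair_ext] at h; omega
    subst hy
    exact Or.inr (Or.inl ⟨x, ⟨h1, by omega⟩, rfl⟩)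
  · -- two plus pairs
    obtain ⟨A, B, hAB, rfl⟩ := Finset.card_eq_two.mp hc
    obtain ⟨a1, a2, ha12, ha1, ha2, hA⟩ := hbounds A (by simp)
    obtain ⟨b1, b2, hb12, hb1, hb2, hB⟩ := hbounds B (by simp)
    subst hA hB
    have nonadj : ∀ x1 x2 y1 y2 : ℕ, x1 < x2 → 1 ≤ x1 → x2 ≤ n+1 → y1 < y2 →
        ({({a1,a2} : Finset ℕ), ({b1,b2} : Finset ℕ)} : Finset (Finset ℕ))
          = {({x1,x2} : Finset ℕ), ({y1,y2} : Finset ℕ)} →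
        x1 + 2 ≤ x2 →
        (∃ a, (1 ≤ a ∧ a ≤ n - 1) ∧
          ({({a1,a2} : Finset ℕ), ({b1,b2} : Finset ℕ)} : Finset (Finset ℕ)) = {pr a, {a, a+2}})
        ∨ (∃ a, (1 ≤ a ∧ a ≤ n - 1) ∧
          ({({a1,a2} : Finset ℕ), ({b1,b2} : Finset ℕ)} : Finset (Finset ℕ))
            = {pr (a+1), {a, a+2}}) := by
      intro x1 x2 y1 y2 hx12 hx1 hx2 hy12 hset hgap
      have gap' : ∀ x c y : ℕ,
          ({x,y} : Finset ℕ) ∈ ({({x1,x2} : Finset ℕ), ({y1,y2} : Finset ℕ)} : Finset (Finset ℕ)) →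
          1 ≤ x → x < c → c < y → y ≤ n+1 →
          ({x,c} : Finset ℕ) ∈ ({({x1,x2} : Finset ℕ), ({y1,y2} : Finset ℕ)} : Finset (Finset ℕ))
          ∨ ({c,y} : Finset ℕ) ∈ ({({x1,x2} : Finset ℕ), ({y1,y2} : Finset ℕ)} : Finset (Finset ℕ)) := by
        rw [← hset]; exact gap
      have g1 := gap' x1 (x1+1) x2 (by simp) hx1 (by omega) (by omega) hx2
      have hx2eq : x2 = x1 + 2 := by
        by_contra hne
        have g2 := gap' x1 (x1+2) x2 (by simp) hx1 (by omega) (by omega) hx2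
        simp only [Finset.mem_insert, Finset.mem_singleton, pair_ext] at g1 g2
        omega
      subst hx2eq
      simp only [Finset.mem_insert, Finset.mem_singleton, pair_ext] at g1
      rw [hset]
      have hy : (y1 = x1 ∧ y2 = x1+1) ∨ (y1 = x1+1 ∧ y2 = x1+2) := by omega
      rcases hy with ⟨h1, h2⟩ | ⟨h1, h2⟩
      · left
        refine ⟨x1, ⟨hx1, by omega⟩, ?_⟩
        have hyy : ({y1, y2} : Finset ℕ) = {x1, x1+1} := by rw [pair_ext]; omega
        rw [hyy, Finset.pair_comm]; rfl
      · right
        refine ⟨x1, ⟨hx1, by omega⟩, ?_⟩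
        have hyy : ({y1, y2} : Finset ℕ) = {x1+1, x1+2} := by rw [pair_ext]; omega
        rw [hyy, Finset.pair_comm]; rfl
    rcases Nat.lt_or_ge a2 (a1 + 2) with hA2 | hA2
    · rcases Nat.lt_or_ge b2 (b1 + 2) with hB2 | hB2
      · -- both adjacent
        have ha2' : a2 = a1 + 1 := by omega
        have hb2' : b2 = b1 + 1 := by omega
        subst ha2' hb2'
        have hne : a1 ≠ b1 := fun h => hAB (by rw [h])
        have key : ∀ u v : ℕ, u + 1 = v →
            ({u,u+1} : Finset ℕ) ∈ ({({a1,a1+1} : Finset ℕ), ({b1,b1+1} : Finset ℕ)} : Finset (Finset ℕ)) →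
            ({v,v+1} : Finset ℕ) ∈ ({({a1,a1+1} : Finset ℕ), ({b1,b1+1} : Finset ℕ)} : Finset (Finset ℕ)) →
            1 ≤ u → v + 1 ≤ n + 1 → False := by
          intro u v huv hu hv h1 h2
          have htr := triple_of_sig hsig (a := u) (b := u+1) (c := u+2) h1 (by omega) (by omega) (by omega)
          simp only [toFun, decide_eq_decide] at htr
          have hu' : ({u, u+2} : Finset ℕ)
              ∉ ({({a1,a1+1} : Finset ℕ), ({b1,b1+1} : Finset ℕ)} : Finset (Finset ℕ)) := by
            intro hmem
            simp only [Finset.mem_insert, Finset.mem_singleton, pair_ext] at hmem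
            omega
          rcases htr with h | h
          · rw [show ({u+1, u+2} : Finset ℕ) = {v, v+1} by rw [pair_ext]; omega] at h
            exact hu' (h.mpr hv)
          · exact hu' (h.mpr hu)
        rcases Nat.lt_trichotomy a1 b1 with h | h | h
        · have hgap : a1 + 2 ≤ b1 := by
            by_contra hcon
            exact key a1 b1 (by omega) (by simp) (by simp) ha1 hb2
          exact Or.inr (Or.inr (Or.inl ⟨a1, b1, ⟨⟨ha1, by omega⟩, ⟨by omega, by omega⟩, hgap⟩, rfl⟩))
        · omega
        · have hgap : b1 + 2 ≤ a1 := by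
            by_contra hcon
            exact key b1 a1 (by omega) (by simp) (by simp) hb1 ha2
          refine Or.inr (Or.inr (Or.inl ⟨b1, a1, ⟨⟨hb1, by omega⟩, ⟨by omega, by omega⟩, hgap⟩, ?_⟩))
          rw [Finset.pair_comm]; rfl
      · -- B non-adjacent
        have := nonadj b1 b2 a1 a2 hb12 hb1 hb2 ha12 (Finset.pair_comm _ _) hB2
        rcases this with ⟨a, ha, heq⟩ | ⟨a, ha, heq⟩
        · exact Or.inr (Or.inr (Or.inr (Or.inl ⟨a, ha, heq⟩)))
        · exact Or.inr (Or.inr (Or.inr (Or.inr ⟨a, ha, heq⟩)))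
    · -- A non-adjacent
      have := nonadj a1 a2 b1 b2 ha12 ha1 ha2 hb12 rfl hA2
      rcases this with ⟨a, ha, heq⟩ | ⟨a, ha, heq⟩
      · exact Or.inr (Or.inr (Or.inr (Or.inl ⟨a, ha, heq⟩)))
      · exact Or.inr (Or.inr (Or.inr (Or.inr ⟨a, ha, heq⟩)))

lemma pair_ext' {α : Type*} [DecidableEq α] {a b c d : α} :
    ({a,b} : Finset α) = {c,d} ↔ (a=c∧b=d)∨(a=d∧b=c) := by
  rw [← Finset.coe_inj]
  push_cast
  rw [Set.pair_eq_pair_iff]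

lemma V2_card (n : ℕ) : (V2 n).card = 1 + n + (n-1).choose 2 + ((n-1) + (n-1)) := by
  set s0 : Finset (Finset (Finset ℕ)) := {(∅ : Finset (Finset ℕ))} with hs0def
  set s1 := (Finset.Icc 1 n).image (fun a => ({pr a} : Finset (Finset ℕ))) with hs1def
  set s2 := (Ipairs n).image (fun p => ({pr p.1, pr p.2} : Finset (Finset ℕ))) with hs2def
  set s3 := (Finset.Icc 1 (n-1)).image (fun a => ({pr a, {a, a+2}} : Finset (Finset ℕ))) with hs3def
  set s4 := (Finset.Icc 1 (n-1)).image (fun a => ({pr (a+1), {a, a+2}} : Finset (Finset ℕ))) with hs4def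
  have D01 : Disjoint s0 s1 := by
    rw [Finset.disjoint_left]
    intro s h1 h2
    simp only [hs0def, hs1def, Finset.mem_singleton, Finset.mem_image] at h1 h2
    obtain ⟨a, _, rfl⟩ := h2
    exact absurd h1 (by simp)
  have D012 : Disjoint (s0 ∪ s1) s2 := by
    rw [Finset.disjoint_left]
    intro s h1 h2
    simp only [hs0def, hs1def, hs2def, Finset.mem_union, Finset.mem_singleton,
      Finset.mem_image, Prod.exists] at h1 h2
    obtain ⟨u, v, huv, rfl⟩ := h2
    simp only [Ipairs, Finset.mem_filter, Finset.mem_product, Finset.mem_Icc] at huv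
    rcases h1 with h | ⟨b, _, h⟩
    · exact absurd h (by simp)
    · have h1' : pr u ∈ ({pr b} : Finset (Finset ℕ)) := by rw [h]; simp
      have h2' : pr v ∈ ({pr b} : Finset (Finset ℕ)) := by rw [h]; simp
      simp only [Finset.mem_singleton, pr, pair_ext] at h1' h2'
      omega
  have D0123 : Disjoint ((s0 ∪ s1) ∪ s2) s3 := by
    rw [Finset.disjoint_left]
    intro s h1 h2
    simp only [hs0def, hs1def, hs2def, hs3def, Finset.mem_union, Finset.mem_singleton,
      Finset.mem_image, Prod.exists] at h1 h2
    obtain ⟨a, ha, rfl⟩ := h2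
    rcases h1 with (h | ⟨b, _, h⟩) | ⟨u, v, huv, h⟩
    · exact absurd h (by simp)
    · have h1' : pr a ∈ ({pr b} : Finset (Finset ℕ)) := by rw [h]; simp
      have h2' : ({a, a+2} : Finset ℕ) ∈ ({pr b} : Finset (Finset ℕ)) := by rw [h]; simp
      simp only [Finset.mem_singleton, pr, pair_ext] at h1' h2'
      omega
    · rw [pair_ext'] at h
      simp only [pr, pair_ext] at h
      omega
  have D01234 : Disjoint (((s0 ∪ s1) ∪ s2) ∪ s3) s4 := by
    rw [Finset.disjoint_left]
    intro s h1 h2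
    simp only [hs0def, hs1def, hs2def, hs3def, hs4def, Finset.mem_union, Finset.mem_singleton,
      Finset.mem_image, Prod.exists] at h1 h2
    obtain ⟨a, ha, rfl⟩ := h2
    rcases h1 with ((h | ⟨b, _, h⟩) | ⟨u, v, huv, h⟩) | ⟨b, hb, h⟩
    · exact absurd h (by simp)
    · have h1' : pr (a+1) ∈ ({pr b} : Finset (Finset ℕ)) := by rw [h]; simp
      have h2' : ({a, a+2} : Finset ℕ) ∈ ({pr b} : Finset (Finset ℕ)) := by rw [h]; simp
      simp only [Finset.mem_singleton, pr, pair_ext] at h1' h2'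
      omega
    · rw [pair_ext'] at h
      simp only [pr, pair_ext] at h
      omega
    · rw [pair_ext'] at h
      simp only [pr, pair_ext] at h
      omega
  have hcount : (V2 n).card = s0.card + s1.card + s2.card + s3.card + s4.card := by
    rw [V2, ← hs0def, ← hs1def, ← hs2def, ← hs3def, ← hs4def,
      Finset.card_union_of_disjoint D01234, Finset.card_union_of_disjoint D0123,
      Finset.card_union_of_disjoint D012, Finset.card_union_of_disjoint D01]
  rw [hcount, hs0def, hs1def, hs2def, hs3def, hs4def, Finset.card_singleton,
    Finset.card_image_of_injOn (by
      intro a _ b _ h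
      simp only [Finset.singleton_inj, pr, pair_ext] at h
      omega),
    Finset.card_image_of_injOn (by
      rintro ⟨a, b⟩ ha ⟨c, d⟩ hc h
      dsimp only at h
      simp only [Ipairs, Finset.mem_coe, Finset.mem_filter, Finset.mem_product,
        Finset.mem_Icc] at ha hc
      simp only [pair_ext', pr, pair_ext] at h
      simp only [Prod.mk.injEq]
      omega),
    Finset.card_image_of_injOn (by
      intro a _ b _ h
      simp only [pair_ext', pr, pair_ext] at h
      omega),
    Finset.card_image_of_injOn (by
      intro a _ b _ h
      simp only [pair_ext', pr, pair_ext] at h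
      omega),
    Nat.card_Icc, Nat.card_Icc, Ipairs_card]
  omega

lemma sig2_eq (n : ℕ) : sigSetLe (n+1) 2 2 = ↑((V2 n).image toFun) := by
  ext σ
  simp only [Finset.coe_image, Set.mem_image, Finset.mem_coe]
  constructor
  · intro h
    obtain ⟨s, rfl, hcard, _⟩ := repr_lemma h
    exact ⟨s, V2_complete h.1 hcard, rfl⟩
  · rintro ⟨s, hs, rfl⟩
    exact V2_sound hs

lemma sig2_ncard (n : ℕ) (hn : 1 ≤ n) :
    (sigSetLe (n+1) 2 2).ncard = 1 + n + n.choose 2 + (n-1) := by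
  rw [sig2_eq, Set.ncard_coe_finset, Finset.card_image_of_injective _ toFun_inj, V2_card]
  obtain ⟨m, rfl⟩ := Nat.exists_eq_add_of_le hn
  have : (1 + m).choose 2 = m.choose 1 + m.choose 2 := by
    rw [Nat.add_comm 1 m]
    exact Nat.choose_succ_succ m 1
  rw [this, Nat.choose_one_right]
  simp only [Nat.add_sub_cancel_left]
  omega

/-- **Tightness.** `|𝒮_{≤2}(n,1)| = 1 + n + C(n,2)` and
`|𝒮_{≤2}(n+1,2)| = 1 + n + C(n,2) + (n-1)`; in particular for `n ≥ 2` there is no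
bijection between `𝒮_{≤2}(n,1)` and `𝒮_{≤2}(n+1,2)`. -/
theorem statement19 :
    (∀ n : ℕ, 1 ≤ n →
      (sigSetLe n 1 2).ncard = 1 + n + n.choose 2 ∧
      (sigSetLe (n + 1) 2 2).ncard = 1 + n + n.choose 2 + (n - 1)) ∧
    (∀ n : ℕ, 2 ≤ n →
      ¬ Nonempty (↥(sigSetLe n 1 2) ≃ ↥(sigSetLe (n + 1) 2 2))) := by
  constructor
  · intro n hn
    exact ⟨sig1_ncard n, sig2_ncard n hn⟩
  · rintro n hn ⟨e⟩
    have h1 := sig1_ncard n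
    have h2 := sig2_ncard n (by omega)
    have hc := Nat.card_congr e
    rw [Nat.card_coe_set_eq, Nat.card_coe_set_eq, h1, h2] at hc
    omega
end
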